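/- arXiv:1106.5042 — 3 statements merged into one kernel-verified Lean document; each statement's English description precedes it below -/
import Mathlib

section
/- The absolute value process |S^{(α)}| of an α-skew random walk has the same distribution as the absolute value |S| of a simple symmetric random walk on ℤ, i.e., |S^{(α)}| is a simple symmetric random walk on ℤ₊ reflected at 0. -/
open MeasureTheory

/-- One-step transition probability of the α-skew random walk. -/
noncomputable def stepP (α : ℝ) (m m' : ℤ) : ℝ :=
  if m' = m + 1 then (if m = 0 then α else 1/2)
  else if m' = m - 1 then (if m = 0 then 1 - α else 1/2)
  else 0

/-- `S` is an α-skew random walk started at `0` under the probability measure `P`: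
its finite-dimensional distributions are given by the product of the one-step
transition probabilities, with initial state `0`. -/
def IsSkewRW (α : ℝ) {Ω : Type*} [MeasurableSpace Ω] (P : Measure Ω)
    (S : ℕ → Ω → ℤ) : Prop :=
  IsProbabilityMeasure P ∧ (∀ k, Measurable (S k)) ∧
  ∀ (n : ℕ) (path : ℕ → ℤ),
    P {ω | ∀ k ≤ n, S k ω = path k} =
      ENNReal.ofReal ((if path 0 = 0 then 1 else 0) *
        ∏ k ∈ Finset.range n, stepP α (path k) (path (k + 1)))

/-- Return probabilities of the simple symmetric random walk. -/
noncomputable def gfun (k : ℕ) : ℝ :=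
  if Even k then (Nat.choose k (k / 2) : ℝ) / 2 ^ k else 0

noncomputable local instance : DecidableEq (ℕ → ℤ) := Classical.decEq _

/-- finite set of signed versions of the abs-path `a` up to time `n` (zero beyond). -/
noncomputable def signed (a : ℕ → ℤ) : ℕ → Finset (ℕ → ℤ)
  | 0 => {fun k => if k = 0 then a 0 else 0, fun k => if k = 0 then -(a 0) else 0}
  | n+1 => (signed a n).biUnion fun b =>
      {Function.update b (n+1) (a (n+1)), Function.update b (n+1) (-(a (n+1)))}

lemma mem_signed {a : ℕ → ℤ} : ∀ {n : ℕ} {b : ℕ → ℤ},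
    b ∈ signed a n ↔ (∀ k ≤ n, b k = a k ∨ b k = -a k) ∧ ∀ k, n < k → b k = 0 := by
  intro n
  induction n with
  | zero =>
    intro b
    simp only [signed, Finset.mem_insert, Finset.mem_singleton]
    constructor
    · rintro (rfl | rfl)
      · exact ⟨fun k hk => by interval_cases k; simp,
          fun k hk => by simp [Nat.pos_iff_ne_zero.mp hk]⟩
      · exact ⟨fun k hk => by interval_cases k; simp,
          fun k hk => by simp [Nat.pos_iff_ne_zero.mp hk]⟩
    · rintro ⟨h1, h2⟩
      rcases h1 0 le_rfl with h | h
      · left; funext k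
        rcases Nat.eq_zero_or_pos k with rfl | hk
        · simp [h]
        · simp [Nat.pos_iff_ne_zero.mp hk, h2 k hk]
      · right; funext k
        rcases Nat.eq_zero_or_pos k with rfl | hk
        · simp [h]
        · simp [Nat.pos_iff_ne_zero.mp hk, h2 k hk]
  | succ n ih =>
    intro b
    simp only [signed, Finset.mem_biUnion, Finset.mem_insert, Finset.mem_singleton]
    constructor
    · rintro ⟨c, hc, rfl | rfl⟩ <;>
      · obtain ⟨h1, h2⟩ := ih.mp hc
        constructor
        · intro k hk
          rcases Nat.lt_or_ge k (n+1) with hk' | hk'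
          · rw [Function.update_of_ne (by omega)]
            exact h1 k (by omega)
          · have : k = n+1 := by omega
            subst this
            simp [Function.update_self]
        · intro k hk
          rw [Function.update_of_ne (by omega)]
          exact h2 k (by omega)
    · rintro ⟨h1, h2⟩
      refine ⟨Function.update b (n+1) 0, ih.mpr ⟨?_, ?_⟩, ?_⟩
      · intro k hk
        rw [Function.update_of_ne (by omega)]
        exact h1 k (by omega)
      · intro k hk
        rcases Nat.lt_or_ge (n+1) k with hk' | hk'
        · rw [Function.update_of_ne (by omega)]; exact h2 k hk'
        · have : k = n+1 := by omega
          subst this; simp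
      · rcases h1 (n+1) le_rfl with h | h
        · left; funext k
          by_cases hk : k = n+1
          · subst hk; simp [h]
          · simp [Function.update_of_ne hk]
        · right; funext k
          by_cases hk : k = n+1
          · subst hk; simp [h]
          · simp [Function.update_of_ne hk]

noncomputable def wgt (α : ℝ) (n : ℕ) (b : ℕ → ℤ) : ℝ :=
  (if b 0 = 0 then 1 else 0) * ∏ k ∈ Finset.range n, stepP α (b k) (b (k + 1))

lemma stepP_nonneg {α : ℝ} (h0 : 0 ≤ α) (h1 : α ≤ 1) (m m' : ℤ) : 0 ≤ stepP α m m' := by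
  unfold stepP; split_ifs <;> linarith

lemma wgt_nonneg {α : ℝ} (h0 : 0 ≤ α) (h1 : α ≤ 1) (n : ℕ) (b : ℕ → ℤ) : 0 ≤ wgt α n b := by
  unfold wgt
  apply mul_nonneg
  · split_ifs <;> norm_num
  · exact Finset.prod_nonneg fun k _ => stepP_nonneg h0 h1 _ _

noncomputable def phi (α : ℝ) (m c : ℤ) : ℝ :=
  if c = 0 then stepP α m 0 else stepP α m c + stepP α m (-c)

lemma stepP_ne {m : ℤ} (hm : m ≠ 0) (α β : ℝ) (v : ℤ) : stepP α m v = stepP β m v := by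
  simp [stepP, hm]

lemma stepP_negneg {m : ℤ} (hm : m ≠ 0) (α : ℝ) (v : ℤ) :
    stepP α (-m) v = stepP α m (-v) := by
  have hm' : -m ≠ 0 := by omega
  unfold stepP
  simp only [if_neg hm, if_neg hm']
  split_ifs <;> first | rfl | (exfalso; omega)

lemma phi_param (α β : ℝ) (m c : ℤ) : phi α m c = phi β m c := by
  by_cases hm : m = 0
  · subst hm
    unfold phi stepP
    split_ifs <;> first | ring1 | (exfalso; omega)
  · unfold phi
    rw [stepP_ne hm α β, stepP_ne hm α β, stepP_ne hm α β]

lemma phi_neg (α : ℝ) (m c : ℤ) : phi α (-m) c = phi α m c := by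
  by_cases hm : m = 0
  · subst hm; norm_num
  · unfold phi
    rw [stepP_negneg hm, stepP_negneg hm, stepP_negneg hm]
    simp only [neg_zero, neg_neg]
    split_ifs <;> ring

lemma wgt_update (α : ℝ) (n : ℕ) (b : ℕ → ℤ) (v : ℤ) :
    wgt α (n + 1) (Function.update b (n + 1) v) = wgt α n b * stepP α (b n) v := by
  unfold wgt
  rw [Finset.prod_range_succ]
  have h0 : Function.update b (n+1) v 0 = b 0 := Function.update_of_ne (by omega) _ _
  have hcongr : ∀ k ∈ Finset.range n,
      stepP α (Function.update b (n+1) v k) (Function.update b (n+1) v (k+1))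
        = stepP α (b k) (b (k+1)) := by
    intro k hk
    simp only [Finset.mem_range] at hk
    rw [Function.update_of_ne (by omega), Function.update_of_ne (by omega)]
  rw [Finset.prod_congr rfl hcongr, h0, Function.update_of_ne (by omega),
    Function.update_self]
  ring

lemma sumPairWgt (α : ℝ) (a : ℕ → ℤ) (n : ℕ) (b : ℕ → ℤ) (hb : b n = a n ∨ b n = -a n) :
    ∑ x ∈ ({Function.update b (n+1) (a (n+1)),
        Function.update b (n+1) (-(a (n+1)))} : Finset (ℕ → ℤ)), wgt α (n+1) x
      = wgt α n b * phi α (a n) (a (n+1)) := by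
  have key : ∑ x ∈ ({Function.update b (n+1) (a (n+1)),
      Function.update b (n+1) (-(a (n+1)))} : Finset (ℕ → ℤ)), wgt α (n+1) x
      = wgt α n b * phi α (b n) (a (n+1)) := by
    by_cases hc : a (n+1) = 0
    · have he : Function.update b (n+1) (-(a (n+1))) = Function.update b (n+1) (a (n+1)) := by
        rw [hc]; norm_num
      rw [he, Finset.insert_eq_self.mpr (Finset.mem_singleton_self _), Finset.sum_singleton,
        wgt_update, hc]
      simp [phi]
    · have hne : Function.update b (n+1) (a (n+1)) ≠ Function.update b (n+1) (-(a (n+1))) := by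
        intro h
        have := congrFun h (n+1)
        simp only [Function.update_self] at this
        omega
      rw [Finset.sum_pair hne, wgt_update, wgt_update, phi, if_neg hc]
      ring
  rw [key]
  rcases hb with h | h
  · rw [h]
  · rw [h, phi_neg]

lemma sum_wgt_eq (α β : ℝ) (a : ℕ → ℤ) : ∀ n,
    ∑ b ∈ signed a n, wgt α n b = ∑ b ∈ signed a n, wgt β n b := by
  intro n
  induction n with
  | zero =>
    apply Finset.sum_congr rfl
    intro b _
    simp [wgt]
  | succ n ih =>
    have hdisj : (↑(signed a n) : Set (ℕ → ℤ)).PairwiseDisjoint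
        (fun b => ({Function.update b (n+1) (a (n+1)),
          Function.update b (n+1) (-(a (n+1)))} : Finset (ℕ → ℤ))) := by
      intro b hb b' hb' hne
      simp only [Function.onFun]
      rw [Finset.disjoint_left]
      intro x hx hx'
      apply hne
      simp only [Finset.mem_coe] at hb hb'
      obtain ⟨h1, h2⟩ := mem_signed.mp hb
      obtain ⟨h1', h2'⟩ := mem_signed.mp hb'
      have hxb : ∀ k ≤ n, x k = b k := by
        intro k hk
        simp only [Finset.mem_insert, Finset.mem_singleton] at hx
        rcases hx with rfl | rfl <;> rw [Function.update_of_ne (by omega)]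
      have hxb' : ∀ k ≤ n, x k = b' k := by
        intro k hk
        simp only [Finset.mem_insert, Finset.mem_singleton] at hx'
        rcases hx' with rfl | rfl <;> rw [Function.update_of_ne (by omega)]
      funext k
      rcases le_or_gt k n with hk | hk
      · rw [← hxb k hk, hxb' k hk]
      · rw [h2 k hk, h2' k hk]
    have hsum : ∀ γ : ℝ, ∑ b ∈ signed a (n+1), wgt γ (n+1) b
        = (∑ b ∈ signed a n, wgt γ n b) * phi γ (a n) (a (n+1)) := by
      intro γ
      rw [show signed a (n+1) = (signed a n).biUnion fun b =>
        ({Function.update b (n+1) (a (n+1)),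
          Function.update b (n+1) (-(a (n+1)))} : Finset (ℕ → ℤ)) from rfl]
      rw [Finset.sum_biUnion hdisj, Finset.sum_mul]
      apply Finset.sum_congr rfl
      intro b hb
      exact sumPairWgt γ a n b ((mem_signed.mp hb).1 n le_rfl)
    rw [hsum α, hsum β, ih, phi_param α β]

lemma measure_abs_cyl {Ω : Type*} [MeasurableSpace Ω] {P : Measure Ω} {S : ℕ → Ω → ℤ}
    {α : ℝ} (h : IsSkewRW α P S) (n : ℕ) (a : ℕ → ℤ) (ha : ∀ k ≤ n, 0 ≤ a k) :
    P {ω | ∀ k ≤ n, |S k ω| = a k} = ∑ b ∈ signed a n, ENNReal.ofReal (wgt α n b) := by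
  obtain ⟨-, hmeas, hcyl⟩ := h
  have hset : {ω | ∀ k ≤ n, |S k ω| = a k}
      = ⋃ b ∈ signed a n, {ω | ∀ k ≤ n, S k ω = b k} := by
    ext ω
    simp only [Set.mem_setOf_eq, Set.mem_iUnion, exists_prop]
    constructor
    · intro hω
      refine ⟨fun k => if k ≤ n then S k ω else 0, mem_signed.mpr ⟨?_, ?_⟩, ?_⟩
      · intro k hk
        simp only [if_pos hk]
        exact (abs_eq (ha k hk)).mp (hω k hk)
      · intro k hk
        simp only [if_neg (by omega : ¬ k ≤ n)]
      · intro k hk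
        simp only [if_pos hk]
    · rintro ⟨b, hb, hω⟩ k hk
      rw [hω k hk]
      rcases (mem_signed.mp hb).1 k hk with h' | h' <;> rw [h']
      · exact abs_of_nonneg (ha k hk)
      · rw [abs_neg]
        exact abs_of_nonneg (ha k hk)
  have hdisj : (↑(signed a n) : Set (ℕ → ℤ)).PairwiseDisjoint
      (fun b => {ω | ∀ k ≤ n, S k ω = b k}) := by
    intro b hb b' hb' hne
    simp only [Function.onFun]
    rw [Set.disjoint_left]
    intro ω hω hω'
    apply hne
    simp only [Finset.mem_coe] at hb hb'
    funext k
    rcases le_or_gt k n with hk | hk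
    · rw [← hω k hk, hω' k hk]
    · rw [(mem_signed.mp hb).2 k hk, (mem_signed.mp hb').2 k hk]
  have hms : ∀ b ∈ signed a n, MeasurableSet {ω | ∀ k ≤ n, S k ω = b k} := by
    intro b _
    have : {ω | ∀ k ≤ n, S k ω = b k} = ⋂ k ∈ Set.Iic n, S k ⁻¹' {b k} := by
      ext ω; simp [Set.mem_iInter]
    rw [this]
    exact MeasurableSet.biInter (Set.to_countable _)
      fun k _ => (hmeas k) (measurableSet_singleton _)
  rw [hset, measure_biUnion_finset hdisj hms]
  exact Finset.sum_congr rfl fun b _ => hcyl n b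

def cylSet (n : ℕ) (a : ℕ → ℤ) : Set (ℕ → ℤ) := {f | ∀ k ≤ n, f k = a k}

def cylC : Set (Set (ℕ → ℤ)) := {s | ∃ n a, s = cylSet n a}

lemma cyl_measurable (n : ℕ) (a : ℕ → ℤ) : MeasurableSet (cylSet n a) := by
  have : cylSet n a = ⋂ k ∈ Set.Iic n, (fun f : ℕ → ℤ => f k) ⁻¹' {a k} := by
    ext f; simp [cylSet, Set.mem_iInter]
  rw [this]
  exact MeasurableSet.biInter (Set.to_countable _)
    fun k _ => (measurable_pi_apply k) (measurableSet_singleton _)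

lemma isPiSystem_cylC : IsPiSystem cylC := by
  rintro s ⟨n, a, rfl⟩ t ⟨m, b, rfl⟩ hne
  obtain ⟨f, hf1, hf2⟩ := hne
  rcases le_total n m with h | h
  · have : cylSet n a ∩ cylSet m b = cylSet m b := by
      apply Set.inter_eq_self_of_subset_right
      intro g hg k hk
      rw [hg k (le_trans hk h), ← hf2 k (le_trans hk h), hf1 k hk]
    rw [this]
    exact ⟨m, b, rfl⟩
  · have : cylSet n a ∩ cylSet m b = cylSet n a := by
      apply Set.inter_eq_self_of_subset_left
      intro g hg k hk
      rw [hg k (le_trans hk h), ← hf1 k (le_trans hk h), hf2 k hk]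
    rw [this]
    exact ⟨n, a, rfl⟩

lemma generateFrom_cylC :
    (inferInstance : MeasurableSpace (ℕ → ℤ)) = MeasurableSpace.generateFrom cylC := by
  apply le_antisymm
  · apply iSup_le
    intro i
    rw [← measurable_iff_comap_le]
    intro s _
    have key : ∀ m : ℤ, MeasurableSet[MeasurableSpace.generateFrom cylC] {f : ℕ → ℤ | f i = m} := by
      intro m
      have hU : {f : ℕ → ℤ | f i = m} = ⋃ v : {v : Fin (i+1) → ℤ // v (Fin.last i) = m},
          cylSet i (fun k => if h : k < i + 1 then v.1 ⟨k, h⟩ else 0) := by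
        ext f
        simp only [Set.mem_setOf_eq, Set.mem_iUnion]
        constructor
        · intro hf
          refine ⟨⟨fun k => f k.1, by simpa [Fin.last] using hf⟩, ?_⟩
          intro k hk
          simp only [dif_pos (by omega : k < i + 1)]
        · rintro ⟨⟨v, hv⟩, hf⟩
          have := hf i le_rfl
          simp only [dif_pos (by omega : i < i + 1)] at this
          rw [this]
          exact hv
      rw [hU]
      exact MeasurableSet.iUnion fun v =>
        MeasurableSpace.measurableSet_generateFrom ⟨i, _, rfl⟩
    have hU2 : (fun f : ℕ → ℤ => f i) ⁻¹' s = ⋃ m ∈ s, {f : ℕ → ℤ | f i = m} := by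
      ext f; simp
    rw [hU2]
    exact MeasurableSet.biUnion (Set.to_countable s) fun m _ => key m
  · apply MeasurableSpace.generateFrom_le
    rintro s ⟨n, a, rfl⟩
    exact cyl_measurable n a

theorem skew_abs_eq_reflected {Ω Ω' : Type*} [MeasurableSpace Ω] [MeasurableSpace Ω']
    (P : Measure Ω) (P' : Measure Ω') (Sα S : ℕ → Ω → ℤ) (S' : ℕ → Ω' → ℤ)
    (α : ℝ) (hα : α ∈ Set.Ioo (0 : ℝ) 1)
    (hSα : IsSkewRW α P Sα) (hS' : IsSkewRW (1/2) P' S') :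
    Measure.map (fun ω => fun k => |Sα k ω|) P =
      Measure.map (fun ω => fun k => |S' k ω|) P' := by
  haveI := hSα.1
  haveI := hS'.1
  have habs : Measurable (fun x : ℤ => |x|) := measurable_from_top
  have hF : Measurable (fun ω => fun k => |Sα k ω|) :=
    measurable_pi_lambda _ fun k => habs.comp (hSα.2.1 k)
  have hF' : Measurable (fun ω => fun k => |S' k ω|) :=
    measurable_pi_lambda _ fun k => habs.comp (hS'.2.1 k)
  haveI : IsProbabilityMeasure (Measure.map (fun ω => fun k => |Sα k ω|) P) :=
    Measure.isProbabilityMeasure_map hF.aemeasurable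
  haveI : IsProbabilityMeasure (Measure.map (fun ω => fun k => |S' k ω|) P') :=
    Measure.isProbabilityMeasure_map hF'.aemeasurable
  apply ext_of_generate_finite cylC generateFrom_cylC isPiSystem_cylC
  · rintro s ⟨n, a, rfl⟩
    rw [Measure.map_apply hF (cyl_measurable n a), Measure.map_apply hF' (cyl_measurable n a)]
    by_cases ha : ∀ k ≤ n, 0 ≤ a k
    · have h1 : (fun ω => fun k => |Sα k ω|) ⁻¹' cylSet n a = {ω | ∀ k ≤ n, |Sα k ω| = a k} := rfl
      have h2 : (fun ω => fun k => |S' k ω|) ⁻¹' cylSet n a = {ω | ∀ k ≤ n, |S' k ω| = a k} := rfl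
      rw [h1, h2, measure_abs_cyl hSα n a ha, measure_abs_cyl hS' n a ha,
        ← ENNReal.ofReal_sum_of_nonneg (fun b _ => wgt_nonneg hα.1.le hα.2.le n b),
        ← ENNReal.ofReal_sum_of_nonneg (fun b _ => wgt_nonneg (by norm_num) (by norm_num) n b),
        sum_wgt_eq α (1/2) a n]
    · push_neg at ha
      obtain ⟨k0, hk0, hk0'⟩ := ha
      have h1 : (fun ω => fun k => |Sα k ω|) ⁻¹' cylSet n a = ∅ := by
        ext ω
        simp only [Set.mem_preimage, Set.mem_empty_iff_false, iff_false, cylSet,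
          Set.mem_setOf_eq, not_forall]
        exact ⟨k0, hk0, fun h => by have := abs_nonneg (Sα k0 ω); omega⟩
      have h2 : (fun ω => fun k => |S' k ω|) ⁻¹' cylSet n a = ∅ := by
        ext ω
        simp only [Set.mem_preimage, Set.mem_empty_iff_false, iff_false, cylSet,
          Set.mem_setOf_eq, not_forall]
        exact ⟨k0, hk0, fun h => by have := abs_nonneg (S' k0 ω); omega⟩
      rw [h1, h2]
      simp
  · simp [measure_univ]
end

section
/- Karamata-type Tauberian theorem for power series (case θ = 1, L ≡ 1): for a sequence of non-negative numbers (μ_n) with generating function ∑ μ_n t^n that is finite for t ∈ [0,1), if ∑_{n=0}^∞ μ_n t^n ∼ (1−t)^{−1} as t ↑ 1, then ∑_{j=0}^n μ_j ∼ n as n → ∞. -/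
open Filter Set Polynomial

lemma pow_sq (μ : ℕ → ℝ)
    (hsum : ∀ t ∈ Set.Ico (0 : ℝ) 1, Summable fun n => μ n * t ^ n)
    {t : ℝ} (ht : t ∈ Set.Ico (0:ℝ) 1) (k : ℕ) :
    Summable (fun n => μ n * (t ^ n) ^ (k+1)) := by
  have h := hsum (t ^ (k+1)) ⟨pow_nonneg ht.1 _, pow_lt_one₀ ht.1 ht.2 (Nat.succ_ne_zero k)⟩
  refine h.congr fun n => ?_
  rw [← pow_mul, ← pow_mul, Nat.mul_comm]

lemma mono_limit (μ : ℕ → ℝ)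
    (hsum : ∀ t ∈ Set.Ico (0 : ℝ) 1, Summable fun n => μ n * t ^ n)
    (hasymp : Filter.Tendsto (fun t : ℝ => (∑' n, μ n * t ^ n) * (1 - t))
      (nhdsWithin 1 (Set.Iio 1)) (nhds 1)) (k : ℕ) :
    Tendsto (fun t : ℝ => (1 - t) * ∑' n, μ n * (t ^ n) ^ (k+1))
      (nhdsWithin 1 (Set.Iio 1)) (nhds (1 / (k+1))) := by
  -- composition t ↦ t^(k+1)
  have hmap : Tendsto (fun t : ℝ => t ^ (k+1)) (nhdsWithin 1 (Set.Iio 1)) (nhdsWithin 1 (Set.Iio 1)) := by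
    apply tendsto_nhdsWithin_of_tendsto_nhds_of_eventually_within
    · have : Tendsto (fun t : ℝ => t ^ (k+1)) (nhds 1) (nhds 1) := by
        simpa using (continuous_pow (k+1)).tendsto (1:ℝ)
      exact this.mono_left nhdsWithin_le_nhds
    · filter_upwards [Ioo_mem_nhdsLT_of_mem (⟨by norm_num, le_refl (1:ℝ)⟩ : (1:ℝ) ∈ Set.Ioc 0 1)]
        with t ht
      exact pow_lt_one₀ ht.1.le ht.2 (Nat.succ_ne_zero k)
  have h1 : Tendsto (fun t : ℝ => (∑' n, μ n * (t^(k+1)) ^ n) * (1 - t^(k+1)))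
      (nhdsWithin 1 (Set.Iio 1)) (nhds 1) := hasymp.comp hmap
  -- geometric sum factor
  have h2 : Tendsto (fun t : ℝ => ∑ i ∈ Finset.range (k+1), t ^ i)
      (nhdsWithin 1 (Set.Iio 1)) (nhds (k+1)) := by
    have : Tendsto (fun t : ℝ => ∑ i ∈ Finset.range (k+1), t ^ i) (nhds 1) (nhds (k+1)) := by
      have := (tendsto_finset_sum (Finset.range (k+1))
        (fun i _ => ((continuous_pow i).tendsto (1:ℝ))))
      simpa using this
    exact this.mono_left nhdsWithin_le_nhds
  have h3 := h1.div h2 (by positivity)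
  apply h3.congr'
  filter_upwards [Ioo_mem_nhdsLT_of_mem (⟨by norm_num, le_refl (1:ℝ)⟩ : (1:ℝ) ∈ Set.Ioc 0 1)]
    with t ht
  have hgs : (1 : ℝ) - t^(k+1) = (∑ i ∈ Finset.range (k+1), t ^ i) * (1 - t) := by
    have := geom_sum_mul (t:ℝ) (k+1)
    ring_nf
    ring_nf at this
    linarith
  have hS : (0:ℝ) < ∑ i ∈ Finset.range (k+1), t ^ i := by
    apply Finset.sum_pos (fun i _ => pow_pos ht.1 i) ⟨0, Finset.mem_range.2 (Nat.succ_pos k)⟩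
  have hts : ∀ n : ℕ, (t ^ n) ^ (k+1) = (t^(k+1)) ^ n := fun n => by
    rw [← pow_mul, ← pow_mul, Nat.mul_comm]
  simp only [Pi.div_apply]
  have htsum : ∑' n, μ n * (t^(k+1))^n = ∑' n, μ n * (t^n)^(k+1) :=
    tsum_congr fun n => by rw [hts n]
  rw [htsum, hgs]
  field_simp

lemma poly_expand {t : ℝ} (μ : ℕ → ℝ) (Q : ℝ[X]) (n : ℕ) :
    μ n * t ^ n * Q.eval (t ^ n)
      = ∑ i ∈ Finset.range (Q.natDegree+1), Q.coeff i * (μ n * (t ^ n) ^ (i+1)) := by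
  rw [Polynomial.eval_eq_sum_range, Finset.mul_sum]
  exact Finset.sum_congr rfl fun i _ => by ring

lemma poly_summable (μ : ℕ → ℝ)
    (hsum : ∀ t ∈ Set.Ico (0 : ℝ) 1, Summable fun n => μ n * t ^ n)
    {t : ℝ} (ht : t ∈ Set.Ico (0:ℝ) 1) (Q : ℝ[X]) :
    Summable fun n => μ n * t ^ n * Q.eval (t ^ n) := by
  refine (summable_sum fun i (_ : i ∈ Finset.range (Q.natDegree+1)) =>
    ((pow_sq μ hsum ht i).mul_left (Q.coeff i))).congr fun n => (poly_expand μ Q n).symm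

lemma poly_limit (μ : ℕ → ℝ)
    (hsum : ∀ t ∈ Set.Ico (0 : ℝ) 1, Summable fun n => μ n * t ^ n)
    (hasymp : Filter.Tendsto (fun t : ℝ => (∑' n, μ n * t ^ n) * (1 - t))
      (nhdsWithin 1 (Set.Iio 1)) (nhds 1)) (Q : ℝ[X]) :
    Tendsto (fun t : ℝ => (1 - t) * ∑' n, μ n * t ^ n * Q.eval (t ^ n))
      (nhdsWithin 1 (Set.Iio 1)) (nhds (∫ x in (0:ℝ)..1, Q.eval x)) := by
  have hint : ∫ x in (0:ℝ)..1, Q.eval x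
      = ∑ i ∈ Finset.range (Q.natDegree+1), Q.coeff i * (1/((i:ℝ)+1)) := by
    rw [intervalIntegral.integral_congr
      (g := fun x => ∑ i ∈ Finset.range (Q.natDegree+1), Q.coeff i * x^i)
      (fun x _ => Polynomial.eval_eq_sum_range x)]
    rw [intervalIntegral.integral_finset_sum (fun i _ =>
      ((by fun_prop : Continuous fun x : ℝ => Q.coeff i * x^i).intervalIntegrable 0 1))]
    refine Finset.sum_congr rfl fun i _ => ?_
    rw [intervalIntegral.integral_const_mul, integral_pow]
    norm_num
  rw [hint]
  have hlim := tendsto_finset_sum (Finset.range (Q.natDegree+1))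
    (fun i _ => ((mono_limit μ hsum hasymp i).const_mul (Q.coeff i)))
  apply hlim.congr'
  filter_upwards [Ioo_mem_nhdsLT_of_mem (⟨by norm_num, le_refl (1:ℝ)⟩ : (1:ℝ) ∈ Set.Ioc 0 1)]
    with t ht
  have ht' : t ∈ Set.Ico (0:ℝ) 1 := ⟨ht.1.le, ht.2⟩
  rw [tsum_congr (poly_expand μ Q), Summable.tsum_finsetSum
    (fun i _ => (pow_sq μ hsum ht' i).mul_left (Q.coeff i)), Finset.mul_sum]
  exact Finset.sum_congr rfl fun i _ => by
    rw [tsum_mul_left]; ring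

lemma ramp_cont (s δ : ℝ) (hδ : 0 < δ) :
    Continuous (fun x : ℝ => min 1 (max 0 ((x - s)/δ))) :=
  continuous_const.min (continuous_const.max ((continuous_id.sub continuous_const).div_const δ))

lemma ramp_nonneg (s δ x : ℝ) : 0 ≤ min 1 (max 0 ((x - s)/δ)) :=
  le_min one_pos.le (le_max_left _ _)

lemma ramp_le_one (s δ x : ℝ) : min 1 (max 0 ((x - s)/δ)) ≤ 1 := min_le_left _ _

lemma ramp_zero (s δ x : ℝ) (hx : x ≤ s) (hδ : 0 < δ) : min 1 (max 0 ((x - s)/δ)) = 0 := by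
  rw [max_eq_left (div_nonpos_of_nonpos_of_nonneg (by linarith) hδ.le), min_eq_right zero_le_one]

lemma ramp_one (s δ x : ℝ) (hx : s + δ ≤ x) (hδ : 0 < δ) : min 1 (max 0 ((x - s)/δ)) = 1 := by
  have h1 : (1:ℝ) ≤ (x - s)/δ := (le_div_iff₀ hδ).2 (by linarith)
  rw [max_eq_right (by linarith), min_eq_left h1]

lemma ramp_integral_le (s δ : ℝ) (hδ : 0 < δ) (hs0 : 0 ≤ s) (hs1 : s ≤ 1) :
    (∫ x in (0:ℝ)..1, min 1 (max 0 ((x - s)/δ))) ≤ 1 - s := by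
  have hi : ∀ u v : ℝ, IntervalIntegrable (fun x : ℝ => min 1 (max 0 ((x - s)/δ))) MeasureTheory.volume u v :=
    fun u v => (ramp_cont s δ hδ).intervalIntegrable u v
  rw [← intervalIntegral.integral_add_adjacent_intervals (hi 0 s) (hi s 1)]
  have h1 : (∫ x in (0:ℝ)..s, min 1 (max 0 ((x - s)/δ))) = 0 := by
    rw [intervalIntegral.integral_congr (g := fun _ => (0:ℝ))
      (fun x hx => ramp_zero s δ x (by
        rw [uIcc_of_le hs0] at hx; exact hx.2) hδ)]
    simp
  have h2 : (∫ x in s..(1:ℝ), min 1 (max 0 ((x - s)/δ))) ≤ ∫ x in s..(1:ℝ), (1:ℝ) := by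
    exact intervalIntegral.integral_mono_on hs1 (hi s 1)
      (intervalIntegrable_const) (fun x _ => ramp_le_one s δ x)
  rw [h1] at *
  simp only [intervalIntegral.integral_const, smul_eq_mul, mul_one] at h2
  linarith

lemma ramp_integral_ge (s δ : ℝ) (hδ : 0 < δ) (hs0 : 0 ≤ s) (hs1 : s + δ ≤ 1) :
    1 - (s + δ) ≤ ∫ x in (0:ℝ)..1, min 1 (max 0 ((x - s)/δ)) := by
  have hi : ∀ u v : ℝ, IntervalIntegrable (fun x : ℝ => min 1 (max 0 ((x - s)/δ))) MeasureTheory.volume u v :=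
    fun u v => (ramp_cont s δ hδ).intervalIntegrable u v
  rw [← intervalIntegral.integral_add_adjacent_intervals (hi 0 (s+δ)) (hi (s+δ) 1)]
  have h1 : (0:ℝ) ≤ ∫ x in (0:ℝ)..(s+δ), min 1 (max 0 ((x - s)/δ)) :=
    intervalIntegral.integral_nonneg (by linarith) (fun x _ => ramp_nonneg s δ x)
  have h2 : (∫ x in (s+δ)..(1:ℝ), min 1 (max 0 ((x - s)/δ))) = ∫ x in (s+δ)..(1:ℝ), (1:ℝ) := by
    apply intervalIntegral.integral_congr
    intro x hx
    rw [uIcc_of_le hs1] at hx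
    exact ramp_one s δ x hx.1 hδ
  rw [h2]
  simp only [intervalIntegral.integral_const, smul_eq_mul, mul_one]
  linarith

lemma exp_lt_one' {x : ℝ} (hx : x < 0) : Real.exp x < 1 := by
  rw [← Real.exp_zero]; exact Real.exp_lt_exp.2 hx

lemma tN_tendsto (c : ℝ) (hc : 0 < c) :
    Tendsto (fun N : ℕ => Real.exp (-(c/N))) atTop (nhdsWithin 1 (Set.Iio 1)) := by
  apply tendsto_nhdsWithin_of_tendsto_nhds_of_eventually_within
  · have h0 : Tendsto (fun N : ℕ => -(c/(N:ℝ))) atTop (nhds 0) := by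
      simpa using (tendsto_const_div_atTop_nhds_zero_nat c).neg
    have h1 := (Real.continuous_exp.tendsto 0).comp h0
    rw [Real.exp_zero] at h1
    exact h1
  · filter_upwards [eventually_ge_atTop 1] with N hN
    have : (0:ℝ) < c / N := div_pos hc (by exact_mod_cast hN)
    exact exp_lt_one' (by linarith)

lemma tN_pow {c : ℝ} (N j : ℕ) : Real.exp (-(c/N)) ^ j = Real.exp (-(c * j / N)) := by
  rw [← Real.exp_nat_mul]
  congr 1
  ring

lemma key_upper (μ : ℕ → ℝ) (hpos : ∀ n, 0 ≤ μ n)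
    (hsum : ∀ t ∈ Set.Ico (0 : ℝ) 1, Summable fun n => μ n * t ^ n)
    (hasymp : Filter.Tendsto (fun t : ℝ => (∑' n, μ n * t ^ n) * (1 - t))
      (nhdsWithin 1 (Set.Iio 1)) (nhds 1)) (c ε : ℝ) (hc : 0 < c) (hε : 0 < ε) :
    ∀ᶠ N : ℕ in atTop, (1 - Real.exp (-(c/N))) *
      (∑ j ∈ Finset.range (N+1), μ j * Real.exp (-(c/N)) ^ j)
      < (1 - Real.exp (-c)) + ε := by
  set a := Real.exp (-c) with ha
  have ha0 : 0 < a := Real.exp_pos _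
  have ha1 : a < 1 := exp_lt_one' (by linarith)
  set δ := min (ε/4) (min (a/2) ((1-a)/2)) with hδdef
  have hδ0 : 0 < δ := lt_min (by linarith) (lt_min (by linarith) (by linarith))
  have hδε : δ ≤ ε/4 := min_le_left _ _
  have hδa : δ ≤ a/2 := le_trans (min_le_right _ _) (min_le_left _ _)
  have hδa' : δ ≤ (1-a)/2 := le_trans (min_le_right _ _) (min_le_right _ _)
  set f := fun x : ℝ => min 1 (max 0 ((x - (a - δ))/δ)) with hfdef
  obtain ⟨Q, hQ⟩ := exists_polynomial_near_of_continuousOn 0 1 f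
    ((ramp_cont (a - δ) δ hδ0).continuousOn) (ε/4) (by linarith)
  set P := Q + Polynomial.C (ε/4) with hPdef
  have hPeval : ∀ x : ℝ, P.eval x = Q.eval x + ε/4 := fun x => by simp [hPdef]
  have hPf : ∀ x ∈ Set.Icc (0:ℝ) 1, f x ≤ P.eval x := by
    intro x hx
    have := abs_lt.1 (hQ x hx)
    rw [hPeval]; linarith [this.1]
  have hP0 : ∀ x ∈ Set.Icc (0:ℝ) 1, 0 ≤ P.eval x :=
    fun x hx => le_trans (ramp_nonneg _ _ _) (hPf x hx)
  have hP1 : ∀ x ∈ Set.Icc (0:ℝ) 1, a ≤ x → 1 ≤ P.eval x := by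
    intro x hx hax
    have hfx : f x = 1 := ramp_one (a - δ) δ x (by linarith) hδ0
    have := hPf x hx
    rw [hfx] at this; exact this
  -- integral bound
  have hintP : (∫ x in (0:ℝ)..1, P.eval x) ≤ (1 - a) + 3*ε/4 := by
    have h1 : (∫ x in (0:ℝ)..1, P.eval x) ≤ ∫ x in (0:ℝ)..1, (f x + ε/2) := by
      apply intervalIntegral.integral_mono_on zero_le_one
        ((Polynomial.continuous_aeval P).intervalIntegrable 0 1 |>.congr ?_)
        (((ramp_cont (a - δ) δ hδ0).add continuous_const).intervalIntegrable 0 1)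
        (fun x hx => by
          have := abs_lt.1 (hQ x hx)
          show P.eval x ≤ f x + ε/2
          rw [hPeval]; linarith [this.2])
      · intro x _; simp
    have h2 : (∫ x in (0:ℝ)..1, (f x + ε/2)) = (∫ x in (0:ℝ)..1, f x) + ε/2 := by
      rw [intervalIntegral.integral_add ((ramp_cont (a - δ) δ hδ0).intervalIntegrable 0 1)
        intervalIntegrable_const]
      simp
      rfl
    have h3 : (∫ x in (0:ℝ)..1, f x) ≤ 1 - (a - δ) :=
      ramp_integral_le (a - δ) δ hδ0 (by linarith) (by linarith)
    linarith
  have hPlim := poly_limit μ hsum hasymp P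
  have hev1 : ∀ᶠ t in nhdsWithin 1 (Set.Iio 1),
      (1 - t) * ∑' n, μ n * t^n * P.eval (t^n) < (1 - a) + ε :=
    hPlim.eventually_lt_const (by linarith)
  filter_upwards [(tN_tendsto c hc).eventually hev1, eventually_ge_atTop 1] with N hN hN1
  set t := Real.exp (-(c/N)) with htdef
  have hcN : (0:ℝ) < c / N := div_pos hc (by exact_mod_cast hN1)
  have ht0 : 0 < t := Real.exp_pos _
  have ht1 : t < 1 := exp_lt_one' (by linarith)
  have htmem : t ∈ Set.Ico (0:ℝ) 1 := ⟨ht0.le, ht1⟩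
  have key : (∑ j ∈ Finset.range (N+1), μ j * t^j) ≤ ∑' n, μ n * t^n * P.eval (t^n) := by
    have hstep : ∀ j ∈ Finset.range (N+1), μ j * t^j ≤ μ j * t^j * P.eval (t^j) := by
      intro j hj
      have hjN : (j:ℝ) ≤ N := by exact_mod_cast Nat.lt_succ_iff.1 (Finset.mem_range.1 hj)
      have htj1 : t^j ≤ 1 := pow_le_one₀ ht0.le ht1.le
      have htj0 : 0 ≤ t^j := pow_nonneg ht0.le j
      have htja : a ≤ t^j := by
        rw [tN_pow, ha]
        apply Real.exp_le_exp.2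
        rw [neg_le_neg_iff]
        apply div_le_of_le_mul₀ ?_ hc.le ?_
        · positivity
        · have hN0 : (0:ℝ) < N := by exact_mod_cast hN1
          nlinarith
      exact le_mul_of_one_le_right (mul_nonneg (hpos j) htj0) (hP1 _ ⟨htj0, htj1⟩ htja)
    calc (∑ j ∈ Finset.range (N+1), μ j * t^j)
        ≤ ∑ j ∈ Finset.range (N+1), μ j * t^j * P.eval (t^j) := Finset.sum_le_sum hstep
      _ ≤ ∑' n, μ n * t^n * P.eval (t^n) := Summable.sum_le_tsum _
          (fun n _ => mul_nonneg (mul_nonneg (hpos n) (pow_nonneg ht0.le n))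
            (hP0 _ ⟨pow_nonneg ht0.le n, pow_le_one₀ ht0.le ht1.le⟩))
          (poly_summable μ hsum htmem P)
  have h1t : (0:ℝ) ≤ 1 - t := by linarith
  calc (1 - t) * (∑ j ∈ Finset.range (N+1), μ j * t^j)
      ≤ (1 - t) * ∑' n, μ n * t^n * P.eval (t^n) := mul_le_mul_of_nonneg_left key h1t
    _ < (1 - a) + ε := hN

lemma key_lower (μ : ℕ → ℝ) (hpos : ∀ n, 0 ≤ μ n)
    (hsum : ∀ t ∈ Set.Ico (0 : ℝ) 1, Summable fun n => μ n * t ^ n)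
    (hasymp : Filter.Tendsto (fun t : ℝ => (∑' n, μ n * t ^ n) * (1 - t))
      (nhdsWithin 1 (Set.Iio 1)) (nhds 1)) (c ε : ℝ) (hc : 0 < c) (hε : 0 < ε) :
    ∀ᶠ N : ℕ in atTop, (1 - Real.exp (-c)) - ε <
      (1 - Real.exp (-(c/N))) * (∑ j ∈ Finset.range (N+1), μ j * Real.exp (-(c/N)) ^ j) := by
  set a := Real.exp (-c) with ha
  have ha0 : 0 < a := Real.exp_pos _
  have ha1 : a < 1 := exp_lt_one' (by linarith)
  set δ := min (ε/4) ((1-a)/2) with hδdef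
  have hδ0 : 0 < δ := lt_min (by linarith) (by linarith)
  have hδε : δ ≤ ε/4 := min_le_left _ _
  have hδa' : δ ≤ (1-a)/2 := min_le_right _ _
  set f := fun x : ℝ => min 1 (max 0 ((x - a)/δ)) with hfdef
  obtain ⟨Q, hQ⟩ := exists_polynomial_near_of_continuousOn 0 1 f
    ((ramp_cont a δ hδ0).continuousOn) (ε/4) (by linarith)
  set p := Q - Polynomial.C (ε/4) with hpdef
  have hpeval : ∀ x : ℝ, p.eval x = Q.eval x - ε/4 := fun x => by simp [hpdef]
  have hpf : ∀ x ∈ Set.Icc (0:ℝ) 1, p.eval x ≤ f x := by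
    intro x hx
    have := abs_lt.1 (hQ x hx)
    rw [hpeval]; linarith [this.2]
  have hp0 : ∀ x ∈ Set.Icc (0:ℝ) 1, x ≤ a → p.eval x ≤ 0 := by
    intro x hx hxa
    have hfx : f x = 0 := ramp_zero a δ x hxa hδ0
    have := hpf x hx
    rw [hfx] at this; exact this
  have hp1 : ∀ x ∈ Set.Icc (0:ℝ) 1, p.eval x ≤ 1 :=
    fun x hx => le_trans (hpf x hx) (ramp_le_one _ _ _)
  have hintp : (1 - a) - ε < ∫ x in (0:ℝ)..1, p.eval x := by
    have h1 : (∫ x in (0:ℝ)..1, (f x - ε/2)) ≤ ∫ x in (0:ℝ)..1, p.eval x := by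
      apply intervalIntegral.integral_mono_on zero_le_one
        (((ramp_cont a δ hδ0).sub continuous_const).intervalIntegrable 0 1)
        ((Polynomial.continuous_aeval p).intervalIntegrable 0 1 |>.congr ?_)
        (fun x hx => by
          have := abs_lt.1 (hQ x hx)
          show f x - ε/2 ≤ p.eval x
          rw [hpeval]; linarith [this.1])
      · intro x _; simp
    have h2 : (∫ x in (0:ℝ)..1, (f x - ε/2)) = (∫ x in (0:ℝ)..1, f x) - ε/2 := by
      rw [intervalIntegral.integral_sub ((ramp_cont a δ hδ0).intervalIntegrable 0 1)
        intervalIntegrable_const]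
      simp
      rfl
    have h3 : 1 - (a + δ) ≤ ∫ x in (0:ℝ)..1, f x :=
      ramp_integral_ge a δ hδ0 ha0.le (by linarith)
    linarith
  have hplim := poly_limit μ hsum hasymp p
  have hev1 : ∀ᶠ t in nhdsWithin 1 (Set.Iio 1),
      (1 - a) - ε < (1 - t) * ∑' n, μ n * t^n * p.eval (t^n) :=
    hplim.eventually_const_lt hintp
  filter_upwards [(tN_tendsto c hc).eventually hev1, eventually_ge_atTop 1] with N hN hN1
  set t := Real.exp (-(c/N)) with htdef
  have hcN : (0:ℝ) < c / N := div_pos hc (by exact_mod_cast hN1)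
  have ht0 : 0 < t := Real.exp_pos _
  have ht1 : t < 1 := exp_lt_one' (by linarith)
  have htmem : t ∈ Set.Ico (0:ℝ) 1 := ⟨ht0.le, ht1⟩
  have htn : ∀ n : ℕ, t^n ∈ Set.Icc (0:ℝ) 1 :=
    fun n => ⟨pow_nonneg ht0.le n, pow_le_one₀ ht0.le ht1.le⟩
  have key : (∑' n, μ n * t^n * p.eval (t^n)) ≤ ∑ j ∈ Finset.range (N+1), μ j * t^j := by
    rw [← Summable.sum_add_tsum_nat_add (N+1) (poly_summable μ hsum htmem p)]
    have htail : (∑' n : ℕ, μ (n+(N+1)) * t^(n+(N+1)) * p.eval (t^(n+(N+1)))) ≤ 0 := by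
      apply tsum_nonpos
      intro n
      apply mul_nonpos_of_nonneg_of_nonpos
        (mul_nonneg (hpos _) (pow_nonneg ht0.le _))
      apply hp0 _ (htn _)
      rw [tN_pow, ha]
      apply Real.exp_le_exp.2
      rw [neg_le_neg_iff]
      rw [le_div_iff₀ (by exact_mod_cast hN1 : (0:ℝ) < N)]
      have : (N:ℝ) + 1 ≤ ((n+(N+1) : ℕ) : ℝ) := by push_cast; linarith
      nlinarith
    have hhead : (∑ j ∈ Finset.range (N+1), μ j * t^j * p.eval (t^j))
        ≤ ∑ j ∈ Finset.range (N+1), μ j * t^j :=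
      Finset.sum_le_sum fun j _ => mul_le_of_le_one_right
        (mul_nonneg (hpos j) (pow_nonneg ht0.le j)) (hp1 _ (htn j))
    linarith
  have h1t : (0:ℝ) ≤ 1 - t := by linarith
  calc (1 - a) - ε < (1 - t) * ∑' n, μ n * t^n * p.eval (t^n) := hN
    _ ≤ (1 - t) * (∑ j ∈ Finset.range (N+1), μ j * t^j) := mul_le_mul_of_nonneg_left key h1t

lemma RN_tendsto (c : ℝ) (hc : 0 < c) :
    Tendsto (fun N : ℕ => (N:ℝ) * (1 - Real.exp (-(c/N)))) atTop (nhds c) := by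
  have hd : HasDerivAt (fun h : ℝ => Real.exp (-(c*h))) (-c) 0 := by
    have h1 : HasDerivAt (fun h : ℝ => -(c*h)) (-c) 0 := by
      have h0 := ((hasDerivAt_id (0:ℝ)).const_mul c).neg
      simp only [mul_one] at h0
      exact h0
    have := h1.exp
    simpa using this
  have hslope := hasDerivAt_iff_tendsto_slope.1 hd
  have hg : Tendsto (fun N : ℕ => 1/(N:ℝ)) atTop (nhdsWithin 0 {(0:ℝ)}ᶜ) := by
    apply tendsto_nhdsWithin_of_tendsto_nhds_of_eventually_within _
      tendsto_one_div_atTop_nhds_zero_nat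
    filter_upwards [eventually_ge_atTop 1] with N hN
    have : (0:ℝ) < N := by exact_mod_cast hN
    simp only [Set.mem_compl_iff, Set.mem_singleton_iff]
    positivity
  have hcomp := (hslope.comp hg).neg
  rw [neg_neg] at hcomp
  apply hcomp.congr'
  filter_upwards [eventually_ge_atTop 1] with N hN
  have hN0 : (0:ℝ) < N := by exact_mod_cast hN
  simp only [Function.comp_apply, slope_def_field]
  field_simp
  simp only [mul_zero, neg_zero, Real.exp_zero]
  ring

lemma tpow_ge (c : ℝ) (hc : 0 < c) {N j : ℕ} (hN : 1 ≤ N) (hj : j ≤ N) :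
    Real.exp (-c) ≤ Real.exp (-(c/N)) ^ j := by
  rw [tN_pow]
  apply Real.exp_le_exp.2
  rw [neg_le_neg_iff]
  have hN0 : (0:ℝ) < N := by exact_mod_cast hN
  rw [div_le_iff₀ hN0]
  have : (j:ℝ) ≤ N := by exact_mod_cast hj
  nlinarith

theorem tauberian_theta_one (μ : ℕ → ℝ) (hpos : ∀ n, 0 ≤ μ n)
    (hsum : ∀ t ∈ Set.Ico (0 : ℝ) 1, Summable fun n => μ n * t ^ n)
    (hasymp : Filter.Tendsto (fun t : ℝ => (∑' n, μ n * t ^ n) * (1 - t))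
      (nhdsWithin 1 (Set.Iio 1)) (nhds 1)) :
    Filter.Tendsto (fun n : ℕ => (∑ j ∈ Finset.range (n + 1), μ j) / (n : ℝ))
      Filter.atTop (nhds 1) := by
  apply tendsto_order.2
  constructor
  · -- lower bound direction
    intro b hb
    set b' := max b (1/2) with hb'def
    have hb'1 : b' < 1 := max_lt hb (by norm_num)
    have hb'0 : (0:ℝ) < b' := lt_of_lt_of_le (by norm_num) (le_max_right _ _)
    have hlb : Real.log b' < 0 := Real.log_neg hb'0 hb'1
    set c := -(Real.log b') / 2 with hcdef
    have hc : 0 < c := by rw [hcdef]; linarith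
    set a := Real.exp (-c) with ha
    have ha0 : 0 < a := Real.exp_pos _
    have ha1 : a < 1 := exp_lt_one' (by linarith)
    have hba : b < a := by
      have h1 : Real.exp (Real.log b') < Real.exp (Real.log b' / 2) :=
        Real.exp_lt_exp.2 (by linarith)
      rw [Real.exp_log hb'0] at h1
      have h2 : -c = Real.log b' / 2 := by rw [hcdef]; ring
      calc b ≤ b' := le_max_left _ _
        _ < Real.exp (Real.log b' / 2) := h1
        _ = a := by rw [ha, h2]
    have hc_ub : a * c ≤ 1 - a := by
      have h1 := Real.add_one_le_exp c
      have h2 : Real.exp c = a⁻¹ := by rw [ha, ← Real.exp_neg, neg_neg]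
      rw [h2] at h1
      have h3 : a * (c + 1) ≤ 1 := by
        calc a * (c+1) ≤ a * a⁻¹ := by nlinarith
          _ = 1 := mul_inv_cancel₀ ha0.ne'
      nlinarith
    have hbc : b * c < 1 - a := by
      rcases le_or_gt b 0 with h | h
      · nlinarith
      · nlinarith [mul_lt_mul_of_pos_right hba hc]
    set ε := ((1-a) - b*c)/2 with hεdef
    have hε : 0 < ε := by rw [hεdef]; linarith
    have hL := key_lower μ hpos hsum hasymp c ε hc hε
    have hev : ∀ᶠ N : ℕ in atTop, b * ((N:ℝ) * (1 - Real.exp (-(c/N)))) < (1-a) - ε := by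
      apply Tendsto.eventually_lt_const _ ((RN_tendsto c hc).const_mul b)
      rw [hεdef]; linarith
    filter_upwards [hL, hev, eventually_ge_atTop 1] with N hN1 hN2 hN3
    set t := Real.exp (-(c/N)) with htdef
    have hcN : (0:ℝ) < c / N := div_pos hc (by exact_mod_cast hN3)
    have ht0 : 0 < t := Real.exp_pos _
    have ht1 : t < 1 := exp_lt_one' (by linarith)
    have hS : (1-t) * (∑ j ∈ Finset.range (N+1), μ j * t^j)
        ≤ (1-t) * ∑ j ∈ Finset.range (N+1), μ j := by
      apply mul_le_mul_of_nonneg_left _ (by linarith)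
      apply Finset.sum_le_sum
      intro j _
      exact mul_le_of_le_one_right (hpos j) (pow_le_one₀ ht0.le ht1.le)
    have hchain : b * ((N:ℝ)*(1-t)) < (1-t) * ∑ j ∈ Finset.range (N+1), μ j :=
      lt_of_lt_of_le (lt_trans hN2 hN1) hS
    have hN0 : (0:ℝ) < N := by exact_mod_cast hN3
    rw [lt_div_iff₀ hN0]
    nlinarith [hchain, sub_pos.2 ht1]
  · -- upper bound direction
    intro b hb
    have hlb : 0 < Real.log b := Real.log_pos hb
    set c := Real.log b / 2 with hcdef
    have hc : 0 < c := by rw [hcdef]; linarith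
    set a := Real.exp (-c) with ha
    have ha0 : 0 < a := Real.exp_pos _
    have ha1 : a < 1 := exp_lt_one' (by linarith)
    have hab : 1 < a * b := by
      have h1 : Real.exp c < Real.exp (Real.log b) := Real.exp_lt_exp.2 (by rw [hcdef]; linarith)
      rw [Real.exp_log (by linarith : (0:ℝ) < b)] at h1
      have h2 : a * Real.exp c = 1 := by rw [ha, ← Real.exp_add]; simp
      nlinarith
    have hc_lb : 1 - a ≤ c := by
      have := Real.add_one_le_exp (-c)
      rw [← ha] at this
      linarith
    have hkey : 1 - a < b * a * c := by
      have : c < b * a * c := by nlinarith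
      linarith
    set ε := (b*a*c - (1-a))/2 with hεdef
    have hε : 0 < ε := by rw [hεdef]; linarith
    have hU := key_upper μ hpos hsum hasymp c ε hc hε
    have hev : ∀ᶠ N : ℕ in atTop, (1-a) + ε < b * a * ((N:ℝ) * (1 - Real.exp (-(c/N)))) := by
      apply Tendsto.eventually_const_lt _ ((RN_tendsto c hc).const_mul (b*a))
      rw [hεdef]; linarith
    filter_upwards [hU, hev, eventually_ge_atTop 1] with N hN1 hN2 hN3
    set t := Real.exp (-(c/N)) with htdef
    have hcN : (0:ℝ) < c / N := div_pos hc (by exact_mod_cast hN3)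
    have ht0 : 0 < t := Real.exp_pos _
    have ht1 : t < 1 := exp_lt_one' (by linarith)
    have hS : (1-t) * (a * ∑ j ∈ Finset.range (N+1), μ j)
        ≤ (1-t) * ∑ j ∈ Finset.range (N+1), μ j * t^j := by
      apply mul_le_mul_of_nonneg_left _ (by linarith)
      rw [Finset.mul_sum]
      apply Finset.sum_le_sum
      intro j hj
      rw [mul_comm a (μ j)]
      exact mul_le_mul_of_nonneg_left
        (tpow_ge c hc hN3 (Nat.lt_succ_iff.1 (Finset.mem_range.1 hj))) (hpos j)
    have hchain : (1-t) * (a * ∑ j ∈ Finset.range (N+1), μ j)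
        < b * a * ((N:ℝ)*(1-t)) := lt_trans (lt_of_le_of_lt hS hN1) hN2
    have hN0 : (0:ℝ) < N := by exact_mod_cast hN3
    rw [div_lt_iff₀ hN0]
    have h1 : 0 < a * (1 - t) := mul_pos ha0 (sub_pos.2 ht1)
    have h2 : a * (1-t) * (∑ j ∈ Finset.range (N+1), μ j) < a * (1-t) * (b * N) := by
      nlinarith [hchain]
    exact lt_of_mul_lt_mul_left h2 h1.le
end

section
/- For any α ∈ (0,1) there exists a constant C_α > 0 such that for all natural numbers j ≤ k, E|S_k − S_j|⁴ ≤ C_α (k−j)², where S is the α-skew random walk. -/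
open MeasureTheory

namespace SkewPf

def stepz (b : Bool) : ℤ := if b then 1 else -1

noncomputable def stepw (α : ℝ) (m : ℤ) (b : Bool) : ℝ :=
  if m = 0 then (if b then α else 1 - α) else 1/2

noncomputable def Ex (α : ℝ) : ℕ → (ℤ → ℝ) → ℤ → ℝ
  | 0, f, m => f m
  | n+1, f, m => stepw α m true * Ex α n f (m+1) + stepw α m false * Ex α n f (m-1)

def ind0 (m : ℤ) : ℝ := if m = 0 then 1 else 0

noncomputable def lt (α : ℝ) : ℕ → ℤ → ℝ
  | 0, _ => 0
  | n+1, m => ind0 m + (stepw α m true * lt α n (m+1) + stepw α m false * lt α n (m-1))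

noncomputable def ltw (α : ℝ) : ℕ → ℤ → ℝ
  | 0, _ => 0
  | n+1, m => 2 * ind0 m + (stepw α m true * (ltw α n (m+1) + 3 * lt α n (m+1))
      + stepw α m false * (ltw α n (m-1) + 3 * lt α n (m-1)))

noncomputable def hit : ℕ → ℤ → ℝ
  | 0, _ => 0
  | n+1, m => if m = 0 then 1 else (hit n (m+1) + hit n (m-1))/2

section basic
variable {α : ℝ}

lemma stepw_nonneg (hα : α ∈ Set.Icc (0:ℝ) 1) (m : ℤ) (b : Bool) : 0 ≤ stepw α m b := by
  obtain ⟨h0, h1⟩ := hα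
  unfold stepw; split <;> [skip; norm_num]
  cases b <;> simp <;> linarith

lemma stepw_sum (m : ℤ) : stepw α m true + stepw α m false = 1 := by
  unfold stepw; split <;> norm_num

lemma Ex_zero (f : ℤ → ℝ) (m : ℤ) : Ex α 0 f m = f m := rfl

lemma Ex_succ (n : ℕ) (f : ℤ → ℝ) (m : ℤ) :
    Ex α (n+1) f m = stepw α m true * Ex α n f (m+1) + stepw α m false * Ex α n f (m-1) := rfl

lemma Ex_congr (n : ℕ) {f g : ℤ → ℝ} (h : ∀ x, f x = g x) (m : ℤ) :
    Ex α n f m = Ex α n g m := by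
  induction n generalizing m with
  | zero => exact h m
  | succ n ih => simp [Ex_succ, ih]

lemma Ex_const (n : ℕ) (c : ℝ) (m : ℤ) : Ex α n (fun _ => c) m = c := by
  induction n generalizing m with
  | zero => rfl
  | succ n ih =>
    simp only [Ex_succ, ih]
    rw [← add_mul, stepw_sum, one_mul]

lemma Ex_add (n : ℕ) (f g : ℤ → ℝ) (m : ℤ) :
    Ex α n (fun x => f x + g x) m = Ex α n f m + Ex α n g m := by
  induction n generalizing m with
  | zero => rfl
  | succ n ih => simp only [Ex_succ, ih]; ring

lemma Ex_mul (n : ℕ) (c : ℝ) (f : ℤ → ℝ) (m : ℤ) :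
    Ex α n (fun x => c * f x) m = c * Ex α n f m := by
  induction n generalizing m with
  | zero => rfl
  | succ n ih => simp only [Ex_succ, ih]; ring

lemma Ex_nonneg (hα : α ∈ Set.Icc (0:ℝ) 1) (n : ℕ) {f : ℤ → ℝ} (hf : ∀ x, 0 ≤ f x) (m : ℤ) : 0 ≤ Ex α n f m := by
  induction n generalizing m with
  | zero => exact hf m
  | succ n ih =>
    simp only [Ex_succ]
    have h1 := stepw_nonneg hα m true
    have h2 := stepw_nonneg hα m false
    have := ih (m := m+1); have := ih (m := m-1)
    positivity

lemma Ex_mono (hα : α ∈ Set.Icc (0:ℝ) 1) (n : ℕ) {f g : ℤ → ℝ} (hfg : ∀ x, f x ≤ g x) (m : ℤ) :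
    Ex α n f m ≤ Ex α n g m := by
  have h := Ex_nonneg (α := α) hα n (f := fun x => g x - f x) (fun x => sub_nonneg.2 (hfg x)) m
  have : Ex α n (fun x => g x - f x) m = Ex α n g m - Ex α n f m := by
    have := Ex_add (α := α) n g (fun x => -f x) m
    have h2 := Ex_mul (α := α) n (-1) f m
    simp only [neg_one_mul] at h2
    calc Ex α n (fun x => g x - f x) m = Ex α n (fun x => g x + -f x) m := by
          apply Ex_congr; intro x; ring
      _ = Ex α n g m + Ex α n (fun x => -f x) m := this
      _ = Ex α n g m - Ex α n f m := by rw [h2]; ring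
  linarith [this ▸ h]


lemma stepw_zt : stepw α 0 true = α := by simp [stepw]
lemma stepw_zf : stepw α 0 false = 1 - α := by simp [stepw]
lemma stepw_ne {m : ℤ} (hm : m ≠ 0) (b : Bool) : stepw α m b = 1/2 := by simp [stepw, hm]

lemma ind0_z : ind0 0 = 1 := rfl
lemma ind0_ne {m : ℤ} (hm : m ≠ 0) : ind0 m = 0 := by simp [ind0, hm]

lemma lt_succ (n : ℕ) (m : ℤ) : lt α (n+1) m
    = ind0 m + (stepw α m true * lt α n (m+1) + stepw α m false * lt α n (m-1)) := rfl

lemma ltw_succ (n : ℕ) (m : ℤ) : ltw α (n+1) m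
    = 2 * ind0 m + (stepw α m true * (ltw α n (m+1) + 3 * lt α n (m+1))
      + stepw α m false * (ltw α n (m-1) + 3 * lt α n (m-1))) := rfl

lemma lt_nonneg (hα : α ∈ Set.Icc (0:ℝ) 1) (n : ℕ) (m : ℤ) : 0 ≤ lt α n m := by
  induction n generalizing m with
  | zero => simp [lt]
  | succ n ih =>
    rw [lt_succ]
    have h1 := stepw_nonneg (α := α) hα m true
    have h2 := stepw_nonneg (α := α) hα m false
    have h3 := ih (m+1); have h4 := ih (m-1)
    have h5 : 0 ≤ ind0 m := by unfold ind0; positivity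
    positivity

lemma ltw_nonneg (hα : α ∈ Set.Icc (0:ℝ) 1) (n : ℕ) (m : ℤ) : 0 ≤ ltw α n m := by
  induction n generalizing m with
  | zero => simp [ltw]
  | succ n ih =>
    rw [ltw_succ]
    have h1 := stepw_nonneg (α := α) hα m true
    have h2 := stepw_nonneg (α := α) hα m false
    have h3 := ih (m+1); have h4 := ih (m-1)
    have g3 := lt_nonneg (α := α) hα n (m+1); have g4 := lt_nonneg (α := α) hα n (m-1)
    have h5 : 0 ≤ ind0 m := by unfold ind0; positivity
    positivity

lemma ltw_le (hα : α ∈ Set.Icc (0:ℝ) 1) (n : ℕ) (m : ℤ) :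
    ltw α n m ≤ (3*n+2) * lt α n m := by
  induction n generalizing m with
  | zero => simp [ltw, lt]
  | succ n ih =>
    rw [ltw_succ, lt_succ]
    have h1 := stepw_nonneg (α := α) hα m true
    have h2 := stepw_nonneg (α := α) hα m false
    have h3 := ih (m+1); have h4 := ih (m-1)
    have g3 := lt_nonneg (α := α) hα n (m+1); have g4 := lt_nonneg (α := α) hα n (m-1)
    have h5 : 0 ≤ ind0 m := by unfold ind0; positivity
    push_cast
    nlinarith [mul_le_mul_of_nonneg_left h3 h1, mul_le_mul_of_nonneg_left h4 h2,
      mul_nonneg h1 g3, mul_nonneg h2 g4]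

lemma M_abs (n : ℕ) (m : ℤ) :
    Ex α n (fun x => |(x:ℝ)|) m = |(m:ℝ)| + lt α n m := by
  induction n generalizing m with
  | zero => simp [Ex_zero, lt]
  | succ n ih =>
    by_cases hm : m = 0
    · subst hm
      rw [Ex_succ, ih, ih, lt_succ, stepw_zt, stepw_zf, ind0_z]
      norm_num; ring
    · have habs : |m+1| + |m-1| = 2*|m| := by
        rcases abs_cases m with ⟨h1,h2⟩|⟨h1,h2⟩ <;> rcases abs_cases (m+1) with ⟨h3,h4⟩|⟨h3,h4⟩ <;>
          rcases abs_cases (m-1) with ⟨h5,h6⟩|⟨h5,h6⟩ <;> omega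
      have habsR : |((m:ℝ))+1| + |((m:ℝ))-1| = 2*|(m:ℝ)| := by
        have := congrArg (fun z : ℤ => (z:ℝ)) habs
        push_cast at this; convert this using 2 <;> push_cast <;> ring
      rw [Ex_succ, ih, ih, lt_succ, stepw_ne hm, stepw_ne hm, ind0_ne hm]
      push_cast
      linarith [habsR]

lemma M1 (n : ℕ) (m : ℤ) :
    Ex α n (fun x => (x:ℝ)) m = m + (2*α-1) * lt α n m := by
  induction n generalizing m with
  | zero => simp [Ex_zero, lt]
  | succ n ih =>
    by_cases hm : m = 0
    · subst hm
      rw [Ex_succ, ih, ih, lt_succ, stepw_zt, stepw_zf, ind0_z]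
      norm_num; ring
    · rw [Ex_succ, ih, ih, lt_succ, stepw_ne hm, stepw_ne hm, ind0_ne hm]
      push_cast; ring

lemma M2 (n : ℕ) (m : ℤ) :
    Ex α n (fun x => (x:ℝ)^2) m = m^2 + n := by
  induction n generalizing m with
  | zero => simp [Ex_zero]
  | succ n ih =>
    by_cases hm : m = 0
    · subst hm
      rw [Ex_succ, ih, ih, stepw_zt, stepw_zf]
      push_cast; ring
    · rw [Ex_succ, ih, ih, stepw_ne hm, stepw_ne hm]
      push_cast; ring

lemma M3 (n : ℕ) (m : ℤ) :
    Ex α n (fun x => (x:ℝ)^3) m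
      = m^3 + 3*n*m + (2*α-1) * (3*n*lt α n m - ltw α n m) := by
  induction n generalizing m with
  | zero => simp [Ex_zero, lt, ltw]
  | succ n ih =>
    by_cases hm : m = 0
    · subst hm
      rw [Ex_succ, ih, ih, lt_succ, ltw_succ, stepw_zt, stepw_zf, ind0_z]
      norm_num; ring
    · rw [Ex_succ, ih, ih, lt_succ, ltw_succ, stepw_ne hm, stepw_ne hm, ind0_ne hm]
      push_cast; ring

lemma M4 (n : ℕ) (m : ℤ) :
    Ex α n (fun x => (x:ℝ)^4) m = m^4 + 6*n*m^2 + 3*(n:ℝ)^2 - 2*n := by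
  induction n generalizing m with
  | zero => simp [Ex_zero]
  | succ n ih =>
    by_cases hm : m = 0
    · subst hm
      rw [Ex_succ, ih, ih, stepw_zt, stepw_zf]
      push_cast; ring
    · rw [Ex_succ, ih, ih, stepw_ne hm, stepw_ne hm]
      push_cast; ring


lemma Ex_cs (hα : α ∈ Set.Icc (0:ℝ) 1) (n : ℕ) (m : ℤ) :
    (Ex α n (fun x => |(x:ℝ)|) m)^2 ≤ Ex α n (fun x => (x:ℝ)^2) m := by
  set c := Ex α n (fun x => |(x:ℝ)|) m with hc
  have h0 : 0 ≤ Ex α n (fun x => (|(x:ℝ)| - c)^2) m :=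
    Ex_nonneg hα n (fun x => sq_nonneg _) m
  have hexp : Ex α n (fun x => (|(x:ℝ)| - c)^2) m
      = Ex α n (fun x => (x:ℝ)^2) m + ((-2*c) * c + c^2) := by
    calc Ex α n (fun x => (|(x:ℝ)| - c)^2) m
        = Ex α n (fun x => (x:ℝ)^2 + ((-2*c) * |(x:ℝ)| + c^2)) m := by
          apply Ex_congr; intro x
          have : |(x:ℝ)|^2 = (x:ℝ)^2 := sq_abs _
          nlinarith [this]
      _ = Ex α n (fun x => (x:ℝ)^2) m + ((-2*c) * c + c^2) := by
          rw [Ex_add, Ex_add, Ex_mul, Ex_const, ← hc]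
  nlinarith [h0, hexp]

lemma lt_le_sqrt (hα : α ∈ Set.Icc (0:ℝ) 1) (n : ℕ) (m : ℤ) :
    lt α n m ≤ Real.sqrt n := by
  have hM := M_abs (α := α) n m
  have hcs := Ex_cs hα n m
  rw [hM, M2] at hcs
  have hnn : (0:ℝ) ≤ |(m:ℝ)| + lt α n m := by
    have := lt_nonneg hα n m; positivity
  have hs : Real.sqrt n * Real.sqrt n = (n:ℝ) := Real.mul_self_sqrt (by positivity)
  by_contra hcon
  push_neg at hcon
  have hz0 : (0:ℝ) ≤ lt α n m := lt_nonneg hα n m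
  have hgt : (n:ℝ) < lt α n m * lt α n m := by
    nlinarith [hs, Real.sqrt_nonneg n, hcon]
  nlinarith [sq_abs (m:ℝ), mul_nonneg (abs_nonneg (m:ℝ)) hz0, hcs, hgt]

lemma hit_succ (n : ℕ) (m : ℤ) :
    hit (n+1) m = if m = 0 then 1 else (hit n (m+1) + hit n (m-1))/2 := rfl

lemma hit_nonneg (n : ℕ) (m : ℤ) : 0 ≤ hit n m := by
  induction n generalizing m with
  | zero => simp [hit]
  | succ n ih =>
    rw [hit_succ]; split
    · norm_num
    · have := ih (m+1); have := ih (m-1); linarith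

lemma hit_le_one (n : ℕ) (m : ℤ) : hit n m ≤ 1 := by
  induction n generalizing m with
  | zero => simp [hit]
  | succ n ih =>
    rw [hit_succ]; split
    · norm_num
    · have := ih (m+1); have := ih (m-1); linarith

lemma hit_bound (n : ℕ) (m : ℤ) : (m:ℝ)^4 * hit n m ≤ 256 * (n:ℝ)^2 := by
  induction n generalizing m with
  | zero => simp [hit]
  | succ n ih =>
    by_cases hm : m = 0
    · subst hm; simp [hit]; positivity
    · rw [hit_succ, if_neg hm]
      rcases Nat.eq_zero_or_pos n with hn | hn
      · subst hn; simp [hit]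
      by_cases hc : (m:ℝ)^2 ≤ 16*((n:ℝ)+1)
      · have h1' : (hit n (m+1) + hit n (m-1))/2 ≤ 1 := by
          have := hit_le_one n (m+1); have := hit_le_one n (m-1); linarith
        have h2 : (0:ℝ) ≤ (hit n (m+1) + hit n (m-1))/2 := by
          have := hit_nonneg n (m+1); have := hit_nonneg n (m-1); linarith
        have h3 : (m:ℝ)^4 ≤ 256*((n:ℝ)+1)^2 := by nlinarith [sq_nonneg ((m:ℝ)^2)]
        push_cast
        nlinarith [mul_le_mul_of_nonneg_left h1' (by positivity : (0:ℝ) ≤ (m:ℝ)^4)]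
      · push_neg at hc
        have hm2 : (33:ℝ) ≤ (m:ℝ)^2 := by
          have : (16:ℝ)*((n:ℝ)+1) ≥ 32 := by
            have : (1:ℝ) ≤ n := by exact_mod_cast hn
            linarith
          have hint : (32:ℝ) < (m:ℝ)^2 := by linarith
          have : 32 < m^2 := by exact_mod_cast hint
          have : 33 ≤ m^2 := by omega
          exact_mod_cast this
        have ihp := ih (m+1); have ihm := ih (m-1)
        have hp0 := hit_nonneg n (m+1); have hm0 := hit_nonneg n (m-1)
        push_cast at ihp ihm
        have hprod : ((m:ℝ)+1)^4*((m:ℝ)-1)^4 = ((m:ℝ)^2-1)^4 := by ring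
        have e1 : (m:ℝ)^4 * (((m:ℝ)-1)^4 * (((m:ℝ)+1)^4 * hit n (m+1)))
            ≤ (m:ℝ)^4 * (((m:ℝ)-1)^4 * (256*(n:ℝ)^2)) := by
          apply mul_le_mul_of_nonneg_left _ (by positivity)
          exact mul_le_mul_of_nonneg_left ihp (by positivity)
        have e2 : (m:ℝ)^4 * (((m:ℝ)+1)^4 * (((m:ℝ)-1)^4 * hit n (m-1)))
            ≤ (m:ℝ)^4 * (((m:ℝ)+1)^4 * (256*(n:ℝ)^2)) := by
          apply mul_le_mul_of_nonneg_left _ (by positivity)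
          exact mul_le_mul_of_nonneg_left ihm (by positivity)
        have hn1 : (1:ℝ) ≤ (n:ℝ) := by exact_mod_cast hn
        have ht : 16*((n:ℝ)+1) < (m:ℝ)^2 := hc
        -- polynomial: m^4*((m+1)^4+(m-1)^4)*256 n^2 ≤ 2*256*(n+1)^2*(m^2-1)^4
        have poly : (m:ℝ)^4 * (((m:ℝ)-1)^4 + ((m:ℝ)+1)^4) * (256*(n:ℝ)^2)
            ≤ 2 * (256*((n:ℝ)+1)^2) * ((m:ℝ)^2-1)^4 := by
          have expand : (((m:ℝ)-1)^4 + ((m:ℝ)+1)^4) = 2*((m:ℝ)^4 + 6*(m:ℝ)^2 + 1) := by ring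
          rw [expand]
          set t := (m:ℝ)^2 with htdef
          have ht33 : (33:ℝ) ≤ t := hm2
          have ht16 : 16*((n:ℝ)+1) < t := hc
          have hm4 : (m:ℝ)^4 = t^2 := by rw [htdef]; ring
          have hm214 : ((m:ℝ)^2-1)^4 = (t-1)^4 := by rw [htdef]
          rw [hm4, hm214]
          have step1 : (n:ℝ)*(10*t^3) ≤ 2*(t-1)^4 := by nlinarith [sq_nonneg t, sq_nonneg (t-1), sq_nonneg ((t-1)^2)]
          nlinarith [sq_nonneg ((n:ℝ)*(t-1)^2), sq_nonneg (t-1), sq_nonneg t, mul_le_mul_of_nonneg_left step1 (by positivity : (0:ℝ) ≤ (n:ℝ))]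
        -- combine: divide by (m^2-1)^4 > 0
        have hden : (0:ℝ) < ((m:ℝ)^2-1)^4 := by
          have h32 : (0:ℝ) < (m:ℝ)^2 - 1 := by linarith
          positivity
        have hcomb : (m:ℝ)^4 * (hit n (m+1) + hit n (m-1)) * ((m:ℝ)^2-1)^4
            ≤ 2*(256*((n:ℝ)+1)^2) * ((m:ℝ)^2-1)^4 := by
          have lhs_eq : (m:ℝ)^4 * (hit n (m+1) + hit n (m-1)) * ((m:ℝ)^2-1)^4
              = (m:ℝ)^4 * (((m:ℝ)-1)^4 * (((m:ℝ)+1)^4 * hit n (m+1)))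
                + (m:ℝ)^4 * (((m:ℝ)+1)^4 * (((m:ℝ)-1)^4 * hit n (m-1))) := by
            rw [← hprod]; ring
          rw [lhs_eq]
          calc (m:ℝ)^4 * (((m:ℝ)-1)^4 * (((m:ℝ)+1)^4 * hit n (m+1)))
                + (m:ℝ)^4 * (((m:ℝ)+1)^4 * (((m:ℝ)-1)^4 * hit n (m-1)))
              ≤ (m:ℝ)^4 * (((m:ℝ)-1)^4 * (256*(n:ℝ)^2)) + (m:ℝ)^4 * (((m:ℝ)+1)^4 * (256*(n:ℝ)^2)) := by
                exact add_le_add e1 e2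
            _ = (m:ℝ)^4 * (((m:ℝ)-1)^4 + ((m:ℝ)+1)^4) * (256*(n:ℝ)^2) := by ring
            _ ≤ 2*(256*((n:ℝ)+1)^2) * ((m:ℝ)^2-1)^4 := poly
        have := le_of_mul_le_mul_right (by linarith [hcomb] :
            ((m:ℝ)^4 * (hit n (m+1) + hit n (m-1))) * ((m:ℝ)^2-1)^4
            ≤ (2*(256*((n:ℝ)+1)^2)) * ((m:ℝ)^2-1)^4) hden
        push_cast
        linarith [this]


lemma lt_le_hit (hα : α ∈ Set.Icc (0:ℝ) 1) (n : ℕ) (m : ℤ) :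
    lt α n m ≤ hit n m * Real.sqrt n := by
  induction n generalizing m with
  | zero => simp [lt, hit]
  | succ n ih =>
    by_cases hm : m = 0
    · subst hm
      rw [hit_succ, if_pos rfl, one_mul]
      exact lt_le_sqrt hα (n+1) 0
    · rw [lt_succ, ind0_ne hm, stepw_ne hm, stepw_ne hm, hit_succ, if_neg hm]
      have h1 := ih (m+1); have h2 := ih (m-1)
      have h3 : Real.sqrt n ≤ Real.sqrt (n+1) := by
        apply Real.sqrt_le_sqrt; push_cast; linarith
      have h4 := hit_nonneg n (m+1); have h5 := hit_nonneg n (m-1)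
      have h6 := Real.sqrt_nonneg (n:ℝ)
      push_cast
      nlinarith [mul_le_mul_of_nonneg_left h3 h4, mul_le_mul_of_nonneg_left h3 h5]

lemma abs_hit_le (n : ℕ) (m : ℤ) : |(m:ℝ)| * hit n m ≤ 4 * Real.sqrt n := by
  rcases Nat.eq_zero_or_pos n with hn | hn
  · subst hn; simp [hit]
  set s := Real.sqrt n with hsdef
  set am := |(m:ℝ)| with hamdef
  have hs0 : 0 ≤ s := Real.sqrt_nonneg _
  have hsp : 0 < s := Real.sqrt_pos.2 (by exact_mod_cast hn)
  have hss : s * s = (n:ℝ) := Real.mul_self_sqrt (by positivity)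
  have ham0 : 0 ≤ am := abs_nonneg _
  have hsq : am^2 = (m:ℝ)^2 := sq_abs _
  have hh0 := hit_nonneg n m
  have hh1 := hit_le_one n m
  have hb := hit_bound n m
  by_cases hc : (m:ℝ)^2 ≤ 16*(n:ℝ)
  · have h1 : am ≤ 4*s := by nlinarith [hsq, hss, hc]
    nlinarith [mul_le_mul_of_nonneg_left hh1 ham0]
  · push_neg at hc
    have h1 : 4*s ≤ am := by nlinarith [hsq, hss, hc]
    have hamp : (0:ℝ) < am := lt_of_lt_of_le (by positivity) h1
    have ham3 : (0:ℝ) < am^3 := pow_pos hamp 3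
    have e1 : am^4 = (m:ℝ)^4 := by
      calc am^4 = (am^2)^2 := by ring
        _ = ((m:ℝ)^2)^2 := by rw [hsq]
        _ = (m:ℝ)^4 := by ring
    have e2 : s^4 = (n:ℝ)^2 := by
      calc s^4 = (s*s)^2 := by ring
        _ = (n:ℝ)^2 := by rw [hss]
    have hb' : am^4 * hit n m ≤ 256*s^4 := by rw [e1, e2]; exact hb
    have h4 : am * hit n m ≤ (256*s^4)/am^3 := by
      rw [le_div_iff₀ ham3]; nlinarith [hb']
    have h5 : (256*s^4)/am^3 ≤ 4*s := by
      rw [div_le_iff₀ ham3]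
      nlinarith [h1, hsp, pow_le_pow_left₀ (by positivity) h1 3]
    linarith

lemma abs3_hit_le (n : ℕ) (m : ℤ) :
    |(m:ℝ)|^3 * hit n m ≤ 64 * (n:ℝ) * Real.sqrt n := by
  rcases Nat.eq_zero_or_pos n with hn | hn
  · subst hn; simp [hit]
  set s := Real.sqrt n with hsdef
  set am := |(m:ℝ)| with hamdef
  have hs0 : 0 ≤ s := Real.sqrt_nonneg _
  have hsp : 0 < s := Real.sqrt_pos.2 (by exact_mod_cast hn)
  have hss : s * s = (n:ℝ) := Real.mul_self_sqrt (by positivity)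
  have ham0 : 0 ≤ am := abs_nonneg _
  have hsq : am^2 = (m:ℝ)^2 := sq_abs _
  have hh0 := hit_nonneg n m
  have hh1 := hit_le_one n m
  have hb := hit_bound n m
  have hns : 64 * (n:ℝ) * s = 64 * s^3 := by nlinarith [hss]
  rw [hns]
  by_cases hc : (m:ℝ)^2 ≤ 16*(n:ℝ)
  · have h1 : am ≤ 4*s := by nlinarith [hsq, hss, hc]
    have h2 : am^3 ≤ 64*s^3 := by nlinarith [pow_le_pow_left₀ ham0 h1 3]
    nlinarith [mul_le_mul_of_nonneg_left hh1 (by positivity : (0:ℝ) ≤ am^3)]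
  · push_neg at hc
    have h1 : 4*s ≤ am := by nlinarith [hsq, hss, hc]
    have hamp : (0:ℝ) < am := by linarith
    have e1 : am^4 = (m:ℝ)^4 := by
      calc am^4 = (am^2)^2 := by ring
        _ = ((m:ℝ)^2)^2 := by rw [hsq]
        _ = (m:ℝ)^4 := by ring
    have e2 : s^4 = (n:ℝ)^2 := by
      calc s^4 = (s*s)^2 := by ring
        _ = (n:ℝ)^2 := by rw [hss]
    have hb' : am^4 * hit n m ≤ 256*s^4 := by rw [e1, e2]; exact hb
    have h4 : am^3 * hit n m ≤ (256*s^4)/am := by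
      rw [le_div_iff₀ hamp]; nlinarith [hb']
    have h5 : (256*s^4)/am ≤ 64*s^3 := by
      rw [div_le_iff₀ hamp]
      nlinarith [mul_le_mul_of_nonneg_left h1 (by positivity : (0:ℝ) ≤ 64*s^3)]
    linarith

lemma abs_lt_le (hα : α ∈ Set.Icc (0:ℝ) 1) (n : ℕ) (m : ℤ) :
    |(m:ℝ)| * lt α n m ≤ 4 * (n:ℝ) := by
  have h1 := lt_le_hit hα n m
  have h2 := abs_hit_le n m
  have hss : Real.sqrt n * Real.sqrt n = (n:ℝ) := Real.mul_self_sqrt (by positivity)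
  have := abs_nonneg (m:ℝ)
  have := Real.sqrt_nonneg (n:ℝ)
  nlinarith [mul_le_mul_of_nonneg_left h1 (abs_nonneg (m:ℝ)),
    mul_le_mul_of_nonneg_right h2 (Real.sqrt_nonneg (n:ℝ))]

lemma abs3_lt_le (hα : α ∈ Set.Icc (0:ℝ) 1) (n : ℕ) (m : ℤ) :
    |(m:ℝ)|^3 * lt α n m ≤ 64 * (n:ℝ)^2 := by
  have h1 := lt_le_hit hα n m
  have h2 := abs3_hit_le n m
  have hss : Real.sqrt n * Real.sqrt n = (n:ℝ) := Real.mul_self_sqrt (by positivity)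
  nlinarith [mul_le_mul_of_nonneg_left h1 (by positivity : (0:ℝ) ≤ |(m:ℝ)|^3),
    mul_le_mul_of_nonneg_right h2 (Real.sqrt_nonneg (n:ℝ))]

set_option maxHeartbeats 1000000 in
lemma e4_bound (hα : α ∈ Set.Icc (0:ℝ) 1) (n : ℕ) (m : ℤ) :
    Ex α n (fun x => ((x:ℝ) - (m:ℝ))^4) m ≤ 400 * (n:ℝ)^2 := by
  rcases Nat.eq_zero_or_pos n with hn | hn
  · subst hn
    rw [Ex_zero]; norm_num
  have hval : Ex α n (fun x => ((x:ℝ) - (m:ℝ))^4) m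
      = Ex α n (fun x => (x:ℝ)^4) m + ((-4*(m:ℝ)) * Ex α n (fun x => (x:ℝ)^3) m
        + ((6*(m:ℝ)^2) * Ex α n (fun x => (x:ℝ)^2) m
        + ((-4*(m:ℝ)^3) * Ex α n (fun x => (x:ℝ)) m + (m:ℝ)^4))) := by
    calc Ex α n (fun x => ((x:ℝ) - (m:ℝ))^4) m
        = Ex α n (fun x => (x:ℝ)^4 + ((-4*(m:ℝ)) * (x:ℝ)^3
            + ((6*(m:ℝ)^2) * (x:ℝ)^2 + ((-4*(m:ℝ)^3) * (x:ℝ) + (m:ℝ)^4)))) m := by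
          apply Ex_congr; intro x; ring
      _ = Ex α n (fun x => (x:ℝ)^4) m + Ex α n (fun x => (-4*(m:ℝ)) * (x:ℝ)^3
            + ((6*(m:ℝ)^2) * (x:ℝ)^2 + ((-4*(m:ℝ)^3) * (x:ℝ) + (m:ℝ)^4))) m := Ex_add ..
      _ = Ex α n (fun x => (x:ℝ)^4) m + (Ex α n (fun x => (-4*(m:ℝ)) * (x:ℝ)^3) m
            + Ex α n (fun x => (6*(m:ℝ)^2) * (x:ℝ)^2 + ((-4*(m:ℝ)^3) * (x:ℝ) + (m:ℝ)^4)) m) := by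
          rw [Ex_add]
      _ = Ex α n (fun x => (x:ℝ)^4) m + (Ex α n (fun x => (-4*(m:ℝ)) * (x:ℝ)^3) m
            + (Ex α n (fun x => (6*(m:ℝ)^2) * (x:ℝ)^2) m
              + Ex α n (fun x => ((-4*(m:ℝ)^3) * (x:ℝ) + (m:ℝ)^4)) m)) := by
          rw [Ex_add (α := α) n (fun x => (6*(m:ℝ)^2) * (x:ℝ)^2)]
      _ = Ex α n (fun x => (x:ℝ)^4) m + (Ex α n (fun x => (-4*(m:ℝ)) * (x:ℝ)^3) m
            + (Ex α n (fun x => (6*(m:ℝ)^2) * (x:ℝ)^2) m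
              + (Ex α n (fun x => (-4*(m:ℝ)^3) * (x:ℝ)) m + Ex α n (fun _ => (m:ℝ)^4) m))) := by
          rw [Ex_add (α := α) n (fun x => (-4*(m:ℝ)^3) * (x:ℝ))]
      _ = Ex α n (fun x => (x:ℝ)^4) m + ((-4*(m:ℝ)) * Ex α n (fun x => (x:ℝ)^3) m
            + ((6*(m:ℝ)^2) * Ex α n (fun x => (x:ℝ)^2) m
            + ((-4*(m:ℝ)^3) * Ex α n (fun x => (x:ℝ)) m + (m:ℝ)^4))) := by
          rw [Ex_mul, Ex_mul, Ex_mul, Ex_const]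
  rw [hval, M1, M2, M3, M4]
  set z := lt α n m with hz
  set w := ltw α n m with hw
  have hz0 : 0 ≤ z := lt_nonneg hα n m
  have hw0 : 0 ≤ w := ltw_nonneg hα n m
  have hwb : w ≤ (3*(n:ℝ)+2) * z := ltw_le hα n m
  have hA : |(m:ℝ)| * z ≤ 4*(n:ℝ) := abs_lt_le hα n m
  have hB : |(m:ℝ)|^3 * z ≤ 64*(n:ℝ)^2 := abs3_lt_le hα n m
  have hβ : |2*α - 1| ≤ 1 := by
    obtain ⟨h0, h1⟩ := hα; rw [abs_le]; constructor <;> linarith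
  have hmz : (m:ℝ) * z ≤ 4*(n:ℝ) ∧ -(4*(n:ℝ)) ≤ (m:ℝ) * z := by
    constructor <;> cases' abs_cases (m:ℝ) with h h <;>
      nlinarith [hA, hz0, h.1, h.2]
  have hm3z : (m:ℝ)^3 * z ≤ 64*(n:ℝ)^2 ∧ -(64*(n:ℝ)^2) ≤ (m:ℝ)^3 * z := by
    have habs3 : |(m:ℝ)|^3 = |(m:ℝ)^3| := by
      rw [← abs_pow]
    constructor <;> cases' abs_cases ((m:ℝ)^3) with h h <;>
      nlinarith [hB, hz0, h.1, h.2, habs3]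
  have hmw : (m:ℝ) * w ≤ (3*(n:ℝ)+2) * (4*(n:ℝ)) ∧ -((3*(n:ℝ)+2) * (4*(n:ℝ))) ≤ (m:ℝ) * w := by
    have hAw : |(m:ℝ)| * w ≤ (3*(n:ℝ)+2) * (4*(n:ℝ)) := by
      calc |(m:ℝ)| * w ≤ |(m:ℝ)| * ((3*(n:ℝ)+2) * z) := by
            apply mul_le_mul_of_nonneg_left hwb (abs_nonneg _)
        _ = (3*(n:ℝ)+2) * (|(m:ℝ)| * z) := by ring
        _ ≤ (3*(n:ℝ)+2) * (4*(n:ℝ)) := by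
            apply mul_le_mul_of_nonneg_left hA (by positivity)
    constructor <;> cases' abs_cases (m:ℝ) with h h <;>
      nlinarith [hAw, hw0, h.1, h.2]
  have hn1 : (1:ℝ) ≤ (n:ℝ) := by exact_mod_cast hn
  -- the value equals 3n^2 - 2n + (2α-1)*(4 m w - 12 n m z - 4 m^3 z)
  have hform : (m:ℝ)^4 + 6*(n:ℝ)*(m:ℝ)^2 + 3*(n:ℝ)^2 - 2*(n:ℝ)
      + ((-4*(m:ℝ)) * ((m:ℝ)^3 + 3*(n:ℝ)*(m:ℝ) + (2*α-1) * (3*(n:ℝ)*z - w))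
        + ((6*(m:ℝ)^2) * ((m:ℝ)^2 + (n:ℝ))
        + ((-4*(m:ℝ)^3) * ((m:ℝ) + (2*α-1) * z) + (m:ℝ)^4)))
      = 3*(n:ℝ)^2 - 2*(n:ℝ)
        + (2*α-1) * (4*((m:ℝ)*w) - 12*(n:ℝ)*((m:ℝ)*z) - 4*((m:ℝ)^3*z)) := by ring
  rw [hform]
  have hcore : |4*((m:ℝ)*w) - 12*(n:ℝ)*((m:ℝ)*z) - 4*((m:ℝ)^3*z)|
      ≤ 4*((3*(n:ℝ)+2) * (4*(n:ℝ))) + 12*(n:ℝ)*(4*(n:ℝ)) + 4*(64*(n:ℝ)^2) := by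
    rw [abs_le]
    constructor <;> nlinarith [hmz.1, hmz.2, hm3z.1, hm3z.2, hmw.1, hmw.2, hn1]
  have hprod : (2*α-1) * (4*((m:ℝ)*w) - 12*(n:ℝ)*((m:ℝ)*z) - 4*((m:ℝ)^3*z))
      ≤ 4*((3*(n:ℝ)+2) * (4*(n:ℝ))) + 12*(n:ℝ)*(4*(n:ℝ)) + 4*(64*(n:ℝ)^2) := by
    calc (2*α-1) * (4*((m:ℝ)*w) - 12*(n:ℝ)*((m:ℝ)*z) - 4*((m:ℝ)^3*z))
        ≤ |2*α-1| * |4*((m:ℝ)*w) - 12*(n:ℝ)*((m:ℝ)*z) - 4*((m:ℝ)^3*z)| := by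
          rw [← abs_mul]; exact le_abs_self _
      _ ≤ 1 * (4*((3*(n:ℝ)+2) * (4*(n:ℝ))) + 12*(n:ℝ)*(4*(n:ℝ)) + 4*(64*(n:ℝ)^2)) := by
          apply mul_le_mul hβ hcore (abs_nonneg _) zero_le_one
      _ = 4*((3*(n:ℝ)+2) * (4*(n:ℝ))) + 12*(n:ℝ)*(4*(n:ℝ)) + 4*(64*(n:ℝ)^2) := one_mul _
  nlinarith [hprod, hn1]


lemma Ex_succ' (n : ℕ) (f : ℤ → ℝ) (m : ℤ) :
    Ex α (n+1) f m
      = Ex α n (fun x => stepw α x true * f (x+1) + stepw α x false * f (x-1)) m := by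
  induction n generalizing m with
  | zero => rfl
  | succ n ih =>
    rw [Ex_succ, ih, ih, ← Ex_succ]

end basic

section paths
variable {α : ℝ}

def posF (m : ℤ) (s : ℕ → Bool) : ℕ → ℤ
  | 0 => m
  | t+1 => posF m s t + stepz (s t)

noncomputable def wtF (α : ℝ) (m : ℤ) (s : ℕ → Bool) (n : ℕ) : ℝ :=
  ∏ i ∈ Finset.range n, stepw α (posF m s i) (s i)

lemma wtF_zero (m : ℤ) (s : ℕ → Bool) : wtF α m s 0 = 1 := by simp [wtF]

lemma wtF_succ (m : ℤ) (s : ℕ → Bool) (n : ℕ) :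
    wtF α m s (n+1) = wtF α m s n * stepw α (posF m s n) (s n) := by
  simp [wtF, Finset.prod_range_succ]

lemma wtF_nonneg (hα : α ∈ Set.Icc (0:ℝ) 1) (m : ℤ) (s : ℕ → Bool) (n : ℕ) :
    0 ≤ wtF α m s n := by
  apply Finset.prod_nonneg
  intro i _
  exact stepw_nonneg hα _ _

lemma posF_congr (m : ℤ) {s s' : ℕ → Bool} (t : ℕ) (h : ∀ i < t, s i = s' i) :
    posF m s t = posF m s' t := by
  induction t with
  | zero => rfl
  | succ t ih =>
    show posF m s t + stepz (s t) = posF m s' t + stepz (s' t)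
    rw [ih (fun i hi => h i (Nat.lt_succ_of_lt hi)), h t (Nat.lt_succ_self t)]

lemma wtF_congr (m : ℤ) {s s' : ℕ → Bool} (n : ℕ) (h : ∀ i < n, s i = s' i) :
    wtF α m s n = wtF α m s' n := by
  unfold wtF
  apply Finset.prod_congr rfl
  intro i hi
  rw [Finset.mem_range] at hi
  rw [posF_congr m i (fun l hl => h l (lt_trans hl hi)), h i hi]

def ncons (b : Bool) (s : ℕ → Bool) : ℕ → Bool
  | 0 => b
  | i+1 => s i

lemma posF_ncons (m : ℤ) (b : Bool) (s : ℕ → Bool) (t : ℕ) :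
    posF m (ncons b s) (t+1) = posF (m + stepz b) s t := by
  induction t with
  | zero => rfl
  | succ t ih =>
    show posF m (ncons b s) (t+1) + stepz (ncons b s (t+1)) = _
    rw [ih]; rfl

lemma wtF_ncons (m : ℤ) (b : Bool) (s : ℕ → Bool) (n : ℕ) :
    wtF α m (ncons b s) (n+1) = stepw α m b * wtF α (m + stepz b) s n := by
  induction n with
  | zero => simp [wtF_succ, wtF_zero]; rfl
  | succ n ih =>
    rw [wtF_succ, ih, wtF_succ, posF_ncons]
    show _ * _ * stepw α _ (s n) = _
    ring

def ext {n : ℕ} (s : Fin n → Bool) : ℕ → Bool :=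
  fun i => if h : i < n then s ⟨i, h⟩ else false

lemma ext_cons_agree {n : ℕ} (b : Bool) (s : Fin n → Bool) :
    ∀ i < n + 1, ext (Fin.cons b s) i = ncons b (ext s) i := by
  intro i hi
  match i with
  | 0 =>
    simp only [ext, ncons, dif_pos hi]
    exact Fin.cons_zero (α := fun _ => Bool) b s
  | (j+1) =>
    have hj : j < n := Nat.lt_of_succ_lt_succ hi
    simp only [ext, ncons, dif_pos hi, dif_pos hj]
    exact Fin.cons_succ (α := fun _ => Bool) b s ⟨j, hj⟩

lemma bridge (hα : α ∈ Set.Icc (0:ℝ) 1) (n : ℕ) (f : ℤ → ℝ) (m : ℤ) :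
    ∑ s : Fin n → Bool, wtF α m (ext s) n * f (posF m (ext s) n) = Ex α n f m := by
  induction n generalizing f m with
  | zero =>
    haveI : Unique (Fin 0 → Bool) := ⟨⟨fun _ => false⟩, fun s => funext fun i => i.elim0⟩
    rw [Fintype.sum_unique]
    simp [wtF_zero, posF, Ex_zero]
  | succ n ih =>
    rw [← Equiv.sum_comp (Fin.consEquiv (fun _ : Fin (n+1) => Bool))]
    rw [Fintype.sum_prod_type]
    have hterm : ∀ (b : Bool) (s : Fin n → Bool),
        wtF α m (ext (Fin.consEquiv (fun _ => Bool) (b, s))) (n+1)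
          * f (posF m (ext (Fin.consEquiv (fun _ => Bool) (b, s))) (n+1))
        = stepw α m b * (wtF α (m + stepz b) (ext s) n * f (posF (m + stepz b) (ext s) n)) := by
      intro b s
      have hagree := ext_cons_agree b s
      have h1 : wtF α m (ext (Fin.cons b s)) (n+1) = stepw α m b * wtF α (m + stepz b) (ext s) n := by
        rw [wtF_congr m (n+1) hagree, wtF_ncons]
      have h2 : posF m (ext (Fin.cons b s)) (n+1) = posF (m + stepz b) (ext s) n := by
        rw [posF_congr m (n+1) hagree, posF_ncons]
      show wtF α m (ext (Fin.cons b s)) (n+1) * f (posF m (ext (Fin.cons b s)) (n+1)) = _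
      rw [h1, h2]; ring
    calc ∑ b : Bool, ∑ s : Fin n → Bool,
            wtF α m (ext (Fin.consEquiv (fun _ => Bool) (b, s))) (n+1)
              * f (posF m (ext (Fin.consEquiv (fun _ => Bool) (b, s))) (n+1))
        = ∑ b : Bool, stepw α m b * ∑ s : Fin n → Bool,
            wtF α (m + stepz b) (ext s) n * f (posF (m + stepz b) (ext s) n) := by
          apply Finset.sum_congr rfl
          intro b _
          rw [Finset.mul_sum]
          exact Finset.sum_congr rfl (fun s _ => hterm b s)
      _ = ∑ b : Bool, stepw α m b * Ex α n f (m + stepz b) := by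
          apply Finset.sum_congr rfl
          intro b _
          rw [ih]
      _ = Ex α (n+1) f m := by
          rw [Fintype.sum_bool, Ex_succ]
          have h1 : m + stepz true = m + 1 := rfl
          have h2 : m + stepz false = m - 1 := by show m + (-1) = m - 1; ring
          rw [h1, h2]


def snocEquiv (N : ℕ) : (Fin N → Bool) × Bool ≃ (Fin (N+1) → Bool) where
  toFun p := Fin.snoc p.1 p.2
  invFun s := (fun i => s i.castSucc, s (Fin.last N))
  left_inv p := by
    refine Prod.ext ?_ ?_
    · funext i
      exact Fin.snoc_castSucc (α := fun _ => Bool) p.2 p.1 i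
    · exact Fin.snoc_last (α := fun _ => Bool) p.2 p.1
  right_inv s := by
    funext i
    refine Fin.lastCases ?_ ?_ i
    · exact Fin.snoc_last (α := fun _ => Bool) _ _
    · intro i; exact Fin.snoc_castSucc (α := fun _ => Bool) _ _ i

lemma ext_snoc_agree {N : ℕ} (s : Fin N → Bool) (b : Bool) :
    ∀ i < N, ext (Fin.snoc s b : Fin (N+1) → Bool) i = ext s i := by
  intro i hi
  have hi' : i < N + 1 := Nat.lt_succ_of_lt hi
  simp only [ext, dif_pos hi, dif_pos hi']
  exact Fin.snoc_castSucc (α := fun _ => Bool) b s ⟨i, hi⟩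

lemma ext_snoc_last {N : ℕ} (s : Fin N → Bool) (b : Bool) :
    ext (Fin.snoc s b : Fin (N+1) → Bool) N = b := by
  simp only [ext, dif_pos (Nat.lt_succ_self N)]
  exact Fin.snoc_last (α := fun _ => Bool) b s

lemma bridge2 (hα : α ∈ Set.Icc (0:ℝ) 1) (j : ℕ) (n : ℕ) (f : ℤ → ℤ → ℝ) (m : ℤ) :
    ∑ s : Fin (j+n) → Bool,
        wtF α m (ext s) (j+n) * f (posF m (ext s) j) (posF m (ext s) (j+n))
      = Ex α j (fun y => Ex α n (f y) y) m := by
  induction n generalizing f with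
  | zero =>
    have h := bridge hα j (fun y => f y y) m
    calc ∑ s : Fin (j+0) → Bool,
          wtF α m (ext s) (j+0) * f (posF m (ext s) j) (posF m (ext s) (j+0))
        = Ex α j (fun y => f y y) m := h
      _ = Ex α j (fun y => Ex α 0 (f y) y) m := by apply Ex_congr; intro y; rfl
  | succ n ih =>
    have key : ∀ (p : (Fin (j+n) → Bool) × Bool),
        wtF α m (ext (snocEquiv (j+n) p)) (j+n+1)
            * f (posF m (ext (snocEquiv (j+n) p)) j) (posF m (ext (snocEquiv (j+n) p)) (j+n+1))
        = wtF α m (ext p.1) (j+n) * (stepw α (posF m (ext p.1) (j+n)) p.2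
            * f (posF m (ext p.1) j) (posF m (ext p.1) (j+n) + stepz p.2)) := by
      rintro ⟨s, b⟩
      simp only [snocEquiv, Equiv.coe_fn_mk]
      have hagree := ext_snoc_agree s b
      have hlast := ext_snoc_last s b
      have h1 : wtF α m (ext (Fin.snoc s b : Fin (j+n+1) → Bool)) (j+n+1)
          = wtF α m (ext s) (j+n) * stepw α (posF m (ext s) (j+n)) b := by
        rw [wtF_succ, wtF_congr m (j+n) hagree,
          posF_congr m (j+n) hagree, hlast]
      have h2 : posF m (ext (Fin.snoc s b : Fin (j+n+1) → Bool)) (j+n+1)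
          = posF m (ext s) (j+n) + stepz b := by
        show posF m _ (j+n) + stepz (ext (Fin.snoc s b : Fin (j+n+1) → Bool) (j+n)) = _
        rw [posF_congr m (j+n) hagree, hlast]
      have h3 : posF m (ext (Fin.snoc s b : Fin (j+n+1) → Bool)) j
          = posF m (ext s) j := by
        apply posF_congr
        intro i hi
        exact hagree i (lt_of_lt_of_le hi (Nat.le_add_right j n))
      rw [h1, h2, h3]; ring
    calc ∑ s : Fin (j+(n+1)) → Bool,
          wtF α m (ext s) (j+(n+1)) * f (posF m (ext s) j) (posF m (ext s) (j+(n+1)))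
        = ∑ p : (Fin (j+n) → Bool) × Bool,
            wtF α m (ext (snocEquiv (j+n) p)) (j+n+1)
              * f (posF m (ext (snocEquiv (j+n) p)) j) (posF m (ext (snocEquiv (j+n) p)) (j+n+1)) :=
          (Equiv.sum_comp (snocEquiv (j+n)) _).symm
      _ = ∑ s : Fin (j+n) → Bool, ∑ b : Bool,
            wtF α m (ext s) (j+n) * (stepw α (posF m (ext s) (j+n)) b
              * f (posF m (ext s) j) (posF m (ext s) (j+n) + stepz b)) := by
          rw [Fintype.sum_prod_type]
          exact Finset.sum_congr rfl (fun s _ => Finset.sum_congr rfl (fun b _ => key (s, b)))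
      _ = ∑ s : Fin (j+n) → Bool,
            wtF α m (ext s) (j+n) * ((fun y x => stepw α x true * f y (x+1)
              + stepw α x false * f y (x-1)) (posF m (ext s) j) (posF m (ext s) (j+n))) := by
          apply Finset.sum_congr rfl
          intro s _
          rw [Fintype.sum_bool]
          have h1 : posF m (ext s) (j+n) + stepz true = posF m (ext s) (j+n) + 1 := rfl
          have h2 : posF m (ext s) (j+n) + stepz false = posF m (ext s) (j+n) - 1 := by
            show _ + (-1) = _ - 1; ring
          rw [h1, h2]; ring
      _ = Ex α j (fun y => Ex α n ((fun y x => stepw α x true * f y (x+1)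
              + stepw α x false * f y (x-1)) y) y) m := by
          exact ih (fun y x => stepw α x true * f y (x+1) + stepw α x false * f y (x-1))
      _ = Ex α j (fun y => Ex α (n+1) (f y) y) m := by
          apply Ex_congr; intro y
          rw [Ex_succ']

lemma comb (hα : α ∈ Set.Icc (0:ℝ) 1) (j n : ℕ) :
    ∑ s : Fin (j+n) → Bool, wtF α 0 (ext s) (j+n)
        * ((posF 0 (ext s) (j+n) - posF 0 (ext s) j : ℤ):ℝ)^4
      ≤ 400 * (n:ℝ)^2 := by
  have hb := bridge2 hα j n (fun y x => ((x - y : ℤ):ℝ)^4) 0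
  rw [hb]
  have hpt : ∀ y : ℤ, Ex α n (fun x => ((x - y : ℤ):ℝ)^4) y ≤ 400 * (n:ℝ)^2 := by
    intro y
    have h1 : Ex α n (fun x => ((x - y : ℤ):ℝ)^4) y
        = Ex α n (fun x => ((x:ℝ) - (y:ℝ))^4) y := by
      apply Ex_congr; intro x; push_cast; ring
    rw [h1]
    exact e4_bound hα n y
  calc Ex α j (fun y => Ex α n (fun x => ((x - y : ℤ):ℝ)^4) y) 0
      ≤ Ex α j (fun _ => 400 * (n:ℝ)^2) 0 := Ex_mono hα j hpt 0
    _ = 400 * (n:ℝ)^2 := Ex_const j _ 0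

lemma sum_wt_one (hα : α ∈ Set.Icc (0:ℝ) 1) (k : ℕ) :
    ∑ s : Fin k → Bool, wtF α 0 (ext s) k = 1 := by
  have hb := bridge hα k (fun _ => (1:ℝ)) 0
  rw [Ex_const] at hb
  simpa using hb

end paths

section measurepart
open MeasureTheory
variable {Ω : Type*} [MeasurableSpace Ω] {α : ℝ}

lemma stepP_eq (α : ℝ) (m : ℤ) (b : Bool) : stepP α m (m + stepz b) = stepw α m b := by
  cases b
  · have h1 : ¬ (m + stepz false = m + 1) := by show ¬ (m + (-1:ℤ) = m + 1); omega
    have h2 : m + stepz false = m - 1 := by show m + (-1:ℤ) = m - 1; ring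
    simp only [stepP, if_neg h1, if_pos h2]
    rfl
  · have h1 : m + stepz true = m + 1 := rfl
    simp only [stepP, h1, if_pos rfl]
    rfl

lemma stepz_inj {b b' : Bool} (h : stepz b = stepz b') : b = b' := by
  cases b <;> cases b' <;> simp_all [stepz]

/-- The cylinder event of a step sequence. -/
def cyl (S : ℕ → Ω → ℤ) (k : ℕ) (s : Fin k → Bool) : Set Ω :=
  {ω | ∀ i ≤ k, S i ω = posF 0 (ext s) i}

lemma cyl_meas (S : ℕ → Ω → ℤ) (hS : ∀ i, Measurable (S i)) (k : ℕ) (s : Fin k → Bool) :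
    MeasurableSet (cyl S k s) := by
  have : cyl S k s = ⋂ i ∈ {i : ℕ | i ≤ k}, (S i) ⁻¹' {posF 0 (ext s) i} := by
    ext ω; simp [cyl]
  rw [this]
  exact MeasurableSet.biInter (Set.to_countable _)
    (fun i _ => (hS i) (measurableSet_singleton _))

lemma cyl_prob (P : Measure Ω) (S : ℕ → Ω → ℤ) (hS : IsSkewRW α P S) (k : ℕ)
    (s : Fin k → Bool) :
    P (cyl S k s) = ENNReal.ofReal (wtF α 0 (ext s) k) := by
  have h := hS.2.2 k (fun i => posF 0 (ext s) i)
  have h0 : posF 0 (ext s) 0 = 0 := rfl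
  rw [h0, if_pos rfl, one_mul] at h
  have hprod : ∏ i ∈ Finset.range k, stepP α (posF 0 (ext s) i) (posF 0 (ext s) (i+1))
      = wtF α 0 (ext s) k := by
    unfold wtF
    apply Finset.prod_congr rfl
    intro i _
    have : posF 0 (ext s) (i+1) = posF 0 (ext s) i + stepz (ext s i) := rfl
    rw [this, stepP_eq]
  rw [hprod] at h
  exact h

lemma cyl_disj (S : ℕ → Ω → ℤ) (k : ℕ) {s s' : Fin k → Bool} (hne : s ≠ s') :
    Disjoint (cyl S k s) (cyl S k s') := by
  rw [Set.disjoint_left]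
  intro ω hω hω'
  apply hne
  funext i
  have key : ∀ t ≤ k, posF 0 (ext s) t = posF 0 (ext s') t := by
    intro t ht
    rw [← hω t ht, hω' t ht]
  have hi : (i : ℕ) < k := i.2
  have h1 := key i (le_of_lt hi)
  have h2 := key (i+1) hi
  have h3 : posF 0 (ext s) ((i:ℕ)+1) = posF 0 (ext s) i + stepz (ext s i) := rfl
  have h4 : posF 0 (ext s') ((i:ℕ)+1) = posF 0 (ext s') i + stepz (ext s' i) := rfl
  have h5 : stepz (ext s i) = stepz (ext s' i) := by omega
  have h6 := stepz_inj h5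
  simp only [ext, dif_pos hi] at h6
  convert h6 using 2 <;> exact (Fin.eta i hi).symm

lemma cyl_union (P : Measure Ω) (S : ℕ → Ω → ℤ) (hα : α ∈ Set.Icc (0:ℝ) 1)
    (hS : IsSkewRW α P S) (k : ℕ) :
    P (⋃ s ∈ (Finset.univ : Finset (Fin k → Bool)), cyl S k s) = 1 := by
  rw [measure_biUnion_finset]
  · rw [Finset.sum_congr rfl (fun s _ => cyl_prob P S hS k s)]
    rw [← ENNReal.ofReal_sum_of_nonneg (fun s _ => wtF_nonneg hα 0 (ext s) k)]
    rw [sum_wt_one hα k]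
    exact ENNReal.ofReal_one
  · intro s _ s' _ hne
    exact cyl_disj S k hne
  · intro s _
    exact cyl_meas S hS.2.1 k s

end measurepart

end SkewPf

theorem skew_fourth_moment_bound {Ω : Type*} [MeasurableSpace Ω]
    (α : ℝ) (hα : α ∈ Set.Ioo (0 : ℝ) 1) :
    ∃ C : ℝ, 0 < C ∧ ∀ (P : Measure Ω) (S : ℕ → Ω → ℤ), IsSkewRW α P S →
      ∀ j k : ℕ, j ≤ k →
        ∫ ω, |((S k ω - S j ω : ℤ) : ℝ)| ^ 4 ∂P ≤ C * ((k : ℝ) - j) ^ 2 := by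
  open SkewPf in
  refine ⟨400, by norm_num, ?_⟩
  intro P S hS j k hjk
  haveI : IsProbabilityMeasure P := hS.1
  have hIcc : α ∈ Set.Icc (0:ℝ) 1 := ⟨hα.1.le, hα.2.le⟩
  obtain ⟨n, rfl⟩ : ∃ n, k = j + n := ⟨k - j, (Nat.add_sub_cancel' hjk).symm⟩
  set k := j + n with hkdef
  -- the cylinder partition
  have hmeas : ∀ s : Fin k → Bool, MeasurableSet (cyl S k s) :=
    fun s => cyl_meas S hS.2.1 k s
  have hprob : ∀ s : Fin k → Bool, P (cyl S k s) = ENNReal.ofReal (wtF α 0 (ext s) k) :=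
    fun s => cyl_prob P S hS k s
  set U := ⋃ s ∈ (Finset.univ : Finset (Fin k → Bool)), cyl S k s with hUdef
  have hUmeas : MeasurableSet U := by
    apply MeasurableSet.biUnion (Set.to_countable _)
    intro s _; exact hmeas s
  have hU1 : P U = 1 := cyl_union P S hIcc hS k
  have hUc : P Uᶜ = 0 := by
    rw [prob_compl_eq_zero_iff hUmeas]; exact hU1
  have haeU : ∀ᵐ ω ∂P, ω ∈ U := by
    rw [ae_iff]
    convert hUc using 2
    rfl
  set c : (Fin k → Bool) → ℝ :=
    fun s => ((posF 0 (ext s) k - posF 0 (ext s) j : ℤ):ℝ)^4 with hcdef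
  set g : Ω → ℝ := fun ω => ∑ s : Fin k → Bool,
    Set.indicator (cyl S k s) (fun _ => c s) ω with hgdef
  have hae : (fun ω => |((S k ω - S j ω : ℤ) : ℝ)| ^ 4) =ᵐ[P] g := by
    filter_upwards [haeU] with ω hω
    rw [hUdef] at hω
    simp only [Set.mem_iUnion] at hω
    obtain ⟨s, _, hs⟩ := hω
    have hSk : S k ω = posF 0 (ext s) k := hs k le_rfl
    have hSj : S j ω = posF 0 (ext s) j := hs j (Nat.le_add_right j n)
    have hLHS : |((S k ω - S j ω : ℤ) : ℝ)| ^ 4 = c s := by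
      rw [hSk, hSj]
      exact Even.pow_abs (⟨2, rfl⟩ : Even 4) _
    rw [hLHS, hgdef]
    symm
    show ∑ s' : Fin k → Bool, (cyl S k s').indicator (fun _ => c s') ω = c s
    rw [Finset.sum_eq_single_of_mem s (Finset.mem_univ s) (fun s' _ hne => by
      apply Set.indicator_of_notMem
      intro hmem
      exact Set.disjoint_left.1 (cyl_disj S k hne) hmem hs)]
    exact Set.indicator_of_mem hs _
  have hint : ∫ ω, |((S k ω - S j ω : ℤ) : ℝ)| ^ 4 ∂P
      = ∑ s : Fin k → Bool, wtF α 0 (ext s) k * c s := by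
    rw [integral_congr_ae hae, hgdef]
    rw [integral_finset_sum _ (fun s _ => (integrable_const (c s)).indicator (hmeas s))]
    apply Finset.sum_congr rfl
    intro s _
    rw [integral_indicator_const _ (hmeas s), measureReal_def, hprob s,
      ENNReal.toReal_ofReal (wtF_nonneg hIcc 0 (ext s) k)]
    rfl
  rw [hint]
  have hcomb := comb hIcc j n
  have hcast : ((k:ℕ):ℝ) - (j:ℝ) = (n:ℝ) := by
    rw [hkdef]; push_cast; ring
  rw [hcast]
  calc ∑ s : Fin k → Bool, wtF α 0 (ext s) k * c s
      = ∑ s : Fin (j+n) → Bool, wtF α 0 (ext s) (j+n)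
          * ((posF 0 (ext s) (j+n) - posF 0 (ext s) j : ℤ):ℝ)^4 := rfl
    _ ≤ 400 * (n:ℝ)^2 := hcomb
end
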